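/- arXiv:2309.04813 — 5 statements merged into one kernel-verified Lean document; each statement's English description precedes it below -/
import Mathlib

section
/- Let s be a positive integer and, for every function τ : {1,…,s} → {1,−1} with τ(1)=1, let m_τ be a positive integer. Let Z ⊆ ℝ^s be a finite set of points such that all |Z|·s coordinates of points of Z are pairwise distinct. Call a sequence z_1,…,z_m of points of Z τ-monotone if for each i with τ(i)=1 the i-th coordinates are strictly increasing, and for each i with τ(i)=−1 they are strictly decreasing. If for each such τ every τ-monotone sequence of points in Z has length at most m_τ, then |Z| ≤ ∏_τ m_τ, where the product runs over all functions τ : {1,…,s} → {1,−1} with τ(1)=1. -/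
open Classical in
/-- `P Z τ z t` : there is a `τ`-monotone chain of `t+1` points of `Z` ending at `z`. -/
def MESP {s : ℕ} (Z : Finset (Fin s → ℝ)) (τ : Fin s → Bool) (z : Fin s → ℝ) (t : ℕ) : Prop :=
  ∃ g : Fin (t + 1) → (Fin s → ℝ), (∀ k, g k ∈ Z) ∧
    (∀ k l : Fin (t + 1), k < l → ∀ i, if τ i = true then g k i < g l i else g l i < g k i) ∧
    g (Fin.last t) = z

open Classical in
noncomputable def MESL {s : ℕ} (Z : Finset (Fin s → ℝ)) (τ : Fin s → Bool) (b : ℕ)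
    (z : Fin s → ℝ) : ℕ :=
  Nat.findGreatest (MESP Z τ z) b

lemma MESP_zero {s : ℕ} {Z : Finset (Fin s → ℝ)} {τ : Fin s → Bool} {z : Fin s → ℝ}
    (hz : z ∈ Z) : MESP Z τ z 0 := by
  refine ⟨fun _ => z, fun _ => hz, ?_, rfl⟩
  intro k l hkl
  exact absurd hkl (by omega)

/-- **Multi-dimensional Erdős–Szekeres theorem, upper bound.** Here `τ : Fin s → Bool` encodes a
sign function (`true` = `+1`, `false` = `-1`), and a sequence of points is `τ`-monotone if its
`i`-th coordinates strictly increase when `τ i = true` and strictly decrease when `τ i = false`. -/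
theorem multidim_erdos_szekeres_upper (s : ℕ) (hs : 0 < s)
    (m : (Fin s → Bool) → ℕ) (hm : ∀ τ, 0 < m τ)
    (Z : Finset (Fin s → ℝ))
    (hdist : ∀ z ∈ Z, ∀ w ∈ Z, ∀ i j : Fin s, z i = w j → z = w ∧ i = j)
    (hmono : ∀ τ : Fin s → Bool, τ ⟨0, hs⟩ = true →
      ∀ t : ℕ, ∀ g : Fin t → (Fin s → ℝ), (∀ k, g k ∈ Z) →
        (∀ i : Fin s, if τ i = true then StrictMono (fun k => g k i)
          else StrictAnti (fun k => g k i)) →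
        t ≤ m τ) :
    Z.card ≤ ∏ τ ∈ Finset.univ.filter (fun τ : Fin s → Bool => τ ⟨0, hs⟩ = true), m τ := by
  classical
  -- from a chain, the hmono hypothesis bounds its length
  have hbound : ∀ τ : Fin s → Bool, τ ⟨0, hs⟩ = true → ∀ z t, MESP Z τ z t → t + 1 ≤ m τ := by
    intro τ hτ z t ⟨g, hgZ, hchain, _⟩
    refine hmono τ hτ (t + 1) g hgZ ?_
    intro i
    by_cases h : τ i = true
    · rw [if_pos h]
      intro k l hkl
      have := hchain k l hkl i
      rwa [if_pos h] at this
    · rw [if_neg h]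
      intro k l hkl
      have := hchain k l hkl i
      rwa [if_neg h] at this
  -- key step: coordinate-distinct points are comparable, and L increases
  have hkey : ∀ z ∈ Z, ∀ w ∈ Z, (∀ i, z i ≠ w i) → z ⟨0, hs⟩ < w ⟨0, hs⟩ →
      MESL Z (fun i => decide (z i < w i)) (m (fun i => decide (z i < w i))) z <
      MESL Z (fun i => decide (z i < w i)) (m (fun i => decide (z i < w i))) w := by
    intro z hz w hw hne h0
    set τ : Fin s → Bool := fun i => decide (z i < w i) with hτdef
    have hτ0 : τ ⟨0, hs⟩ = true := by simp [hτdef, h0]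
    -- z ≺_τ w componentwise
    have hzw : ∀ i, if τ i = true then z i < w i else w i < z i := by
      intro i
      by_cases h : τ i = true
      · rw [if_pos h]; exact of_decide_eq_true h
      · rw [if_neg h]
        have : ¬ (z i < w i) := by
          intro hlt; exact h (by simp [hτdef, hlt])
        exact lt_of_le_of_ne (not_lt.mp this) (Ne.symm (hne i))
    set L := MESL Z τ (m τ) z with hL
    -- get a chain of length L+1 ending at z
    have hPz : MESP Z τ z L := by
      have := Nat.findGreatest_spec (P := MESP Z τ z) (Nat.zero_le (m τ)) (MESP_zero hz)
      exact this
    obtain ⟨g, hgZ, hchain, hglast⟩ := hPz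
    -- extend by w
    have hPw : MESP Z τ w (L + 1) := by
      refine ⟨Fin.snoc g w, ?_, ?_, ?_⟩
      · intro k
        refine Fin.lastCases ?_ ?_ k
        · simpa using hw
        · intro k'; simpa using hgZ k'
      · intro k l hkl i
        induction l using Fin.lastCases with
        | last =>
          have hk : (k : ℕ) < L + 1 := by
            simp [Fin.lt_def] at hkl; omega
          have hkcast : k = Fin.castSucc ⟨(k : ℕ), hk⟩ := by
            ext; simp
          rw [hkcast, Fin.snoc_castSucc, Fin.snoc_last]
          -- g k' ≺ w : either g k' = z or g k' ≺ z ≺ w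
          by_cases hkL : (k : ℕ) = L
          · have : (⟨(k : ℕ), hk⟩ : Fin (L + 1)) = Fin.last L := by ext; simpa using hkL
            rw [this, hglast]
            exact hzw i
          · have hklt : (⟨(k : ℕ), hk⟩ : Fin (L + 1)) < Fin.last L := by
              simp [Fin.lt_def]; omega
            have h1 := hchain _ _ hklt i
            rw [hglast] at h1
            have h2 := hzw i
            by_cases h : τ i = true
            · rw [if_pos h] at h1 h2 ⊢; exact h1.trans h2
            · rw [if_neg h] at h1 h2 ⊢; exact h2.trans h1
        | cast l' =>
          have hk : (k : ℕ) < L + 1 := by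
            simp [Fin.lt_def] at hkl; omega
          have hkcast : k = Fin.castSucc ⟨(k : ℕ), hk⟩ := by ext; simp
          rw [hkcast, Fin.snoc_castSucc, Fin.snoc_castSucc]
          refine hchain _ _ ?_ i
          simp only [Fin.lt_def] at hkl ⊢
          simpa using hkl
      · simp
    have hle : L + 1 ≤ m τ := by
      have := hbound τ hτ0 w (L + 1) hPw
      omega
    have hge := Nat.le_findGreatest hle hPw
    have hEw : MESL Z τ (m τ) w = Nat.findGreatest (MESP Z τ w) (m τ) := rfl
    rw [hEw]
    omega
  -- the injection
  set f : (Fin s → ℝ) → ((Fin s → Bool) → ℕ) :=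
    fun z τ => if τ ⟨0, hs⟩ = true then MESL Z τ (m τ) z else 0 with hf
  have hne : ∀ z ∈ Z, ∀ w ∈ Z, z ≠ w → ∀ i, z i ≠ w i := by
    intro z hz w hw hzw i heq
    exact hzw (hdist z hz w hw i i heq).1
  have hinj : Set.InjOn f Z := by
    intro z hz w hw hfzw
    by_contra hzw
    have hne' := hne z hz w hw hzw
    rcases lt_or_gt_of_ne (hne' ⟨0, hs⟩) with h0 | h0
    · have := hkey z hz w hw hne' h0
      set τ : Fin s → Bool := fun i => decide (z i < w i)
      have hτ0 : τ ⟨0, hs⟩ = true := by simp [τ, h0]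
      have := congrFun hfzw τ
      simp only [hf, if_pos hτ0] at this
      omega
    · have hne'' : ∀ i, w i ≠ z i := fun i => (hne' i).symm
      have := hkey w hw z hz hne'' h0
      set τ : Fin s → Bool := fun i => decide (w i < z i)
      have hτ0 : τ ⟨0, hs⟩ = true := by simp [τ, h0]
      have := congrFun hfzw τ
      simp only [hf, if_pos hτ0] at this
      omega
  have hmaps : ∀ z ∈ Z, f z ∈ Fintype.piFinset
      (fun τ : Fin s → Bool => if τ ⟨0, hs⟩ = true then Finset.range (m τ) else {0}) := by
    intro z hz
    rw [Fintype.mem_piFinset]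
    intro τ
    by_cases h : τ ⟨0, hs⟩ = true
    · rw [if_pos h]
      simp only [hf, if_pos h, Finset.mem_range]
      have hspec := Nat.findGreatest_spec (P := MESP Z τ z) (Nat.zero_le (m τ)) (MESP_zero hz)
      have := hbound τ h z _ hspec
      simp only [MESL]
      omega
    · rw [if_neg h]
      simp [hf, if_neg h]
  calc Z.card ≤ (Fintype.piFinset
      (fun τ : Fin s → Bool => if τ ⟨0, hs⟩ = true then Finset.range (m τ) else {0})).card :=
        Finset.card_le_card_of_injOn f hmaps hinj
    _ = ∏ τ : Fin s → Bool, (if τ ⟨0, hs⟩ = true then Finset.range (m τ) else {0}).card := by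
        rw [Fintype.card_piFinset]
    _ = ∏ τ : Fin s → Bool, (if τ ⟨0, hs⟩ = true then m τ else 1) := by
        apply Finset.prod_congr rfl
        intro τ _
        by_cases h : τ ⟨0, hs⟩ = true <;> simp [h]
    _ = ∏ τ ∈ Finset.univ.filter (fun τ : Fin s → Bool => τ ⟨0, hs⟩ = true), m τ := by
        rw [Finset.prod_filter]
end

section
/- Let s be a positive integer and, for every function τ : {1,…,s} → {1,−1} with τ(1)=1, let m_τ be a positive integer. Then there exists a set Z ⊆ ℝ^s of size |Z| = ∏_τ m_τ whose |Z|·s coordinates are pairwise distinct, such that for every τ : {1,…,s} → {1,−1} with τ(1)=1, every τ-monotone sequence of points in Z has length at most m_τ. -/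
open Finset

namespace MES

/-- Arithmetic dominance: if `|R| < N` and `x ≠ 0`, the sign of `x * N + R` is the sign of `x`. -/
lemma dominant {x R N : ℤ} (hx : x ≠ 0) (hR : |R| < N) :
    (0 < x * N + R ↔ 0 < x) ∧ x * N + R ≠ 0 := by
  have hN : 0 < N := lt_of_le_of_lt (abs_nonneg R) hR
  have hR1 : -N < R := (abs_lt.mp hR).1
  have hR2 : R < N := (abs_lt.mp hR).2
  rcases lt_or_gt_of_ne hx with h | h
  · have hx1 : x ≤ -1 := by omega
    have hxn : x * N ≤ -N := by nlinarith
    refine ⟨⟨fun hp => by nlinarith, fun hp => by nlinarith⟩, fun hz => by nlinarith⟩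
  · have hx1 : 1 ≤ x := h
    have hxn : N ≤ x * N := by nlinarith
    refine ⟨⟨fun _ => h, fun _ => by nlinarith⟩, fun hz => by nlinarith⟩

variable {s : ℕ}

section Defs
variable (hs : 0 < s) (m : (Fin s → Bool) → ℕ)

def mm (τ : Fin s → Bool) : ℕ := if τ ⟨0, hs⟩ = true then m τ else 1

def M : ℕ := 2 + ∑ τ : Fin s → Bool, m τ

lemma mm_le (τ : Fin s → Bool) : mm hs m τ ≤ M m - 1 := by
  have h1 : m τ ≤ ∑ τ' : Fin s → Bool, m τ' :=
    Finset.single_le_sum (fun _ _ => Nat.zero_le _) (mem_univ τ)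
  unfold mm M
  split <;> omega

noncomputable def enc : (Fin s → Bool) → ℕ :=
  fun τ => (Fintype.equivFin (Fin s → Bool) τ : ℕ)

lemma enc_inj : Function.Injective (enc (s := s)) :=
  Fin.val_injective.comp (Fintype.equivFin _).injective

noncomputable def F (a : ∀ τ : Fin s → Bool, Fin (mm hs m τ)) (i : Fin s) : ℤ :=
  ∑ τ : Fin s → Bool, (if τ i = true then 1 else -1) * ((a τ : ℕ) : ℤ) * (M m : ℤ) ^ enc τ

/-- Key lexicographic-domination lemma. -/
lemma F_key (a b : ∀ τ : Fin s → Bool, Fin (mm hs m τ)) (hab : a ≠ b) :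
    ∃ τ0 : Fin s → Bool, τ0 ⟨0, hs⟩ = true ∧ (a τ0 : ℕ) ≠ (b τ0 : ℕ) ∧
      ∀ i : Fin s,
        (F hs m a i < F hs m b i ↔
          (if τ0 i = true then ((a τ0 : ℕ) < (b τ0 : ℕ)) else ((b τ0 : ℕ) < (a τ0 : ℕ)))) ∧
        F hs m a i ≠ F hs m b i := by
  classical
  set D : Finset (Fin s → Bool) := univ.filter (fun τ => (a τ : ℕ) ≠ (b τ : ℕ)) with hD
  have hDne : D.Nonempty := by
    obtain ⟨τ, hτ⟩ := Function.ne_iff.mp hab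
    exact ⟨τ, Finset.mem_filter.mpr ⟨mem_univ τ, fun h => hτ (Fin.ext h)⟩⟩
  obtain ⟨τ0, hτ0D, hmax⟩ := D.exists_max_image (enc (s := s)) hDne
  have hτ0ne : (a τ0 : ℕ) ≠ (b τ0 : ℕ) := by simpa [hD] using hτ0D
  have hτ0true : τ0 ⟨0, hs⟩ = true := by
    by_contra h
    have h1 : mm hs m τ0 = 1 := by unfold mm; simp [h]
    have := (a τ0).isLt
    have := (b τ0).isLt
    omega
  refine ⟨τ0, hτ0true, hτ0ne, fun i => ?_⟩
  set Mz : ℤ := (M m : ℤ) with hMz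
  have hM2 : (2 : ℤ) ≤ Mz := by
    have h : 2 ≤ M m := by unfold M; omega
    rw [hMz]
    exact_mod_cast h
  set G : (Fin s → Bool) → ℤ :=
    fun τ => (if τ i = true then 1 else -1) * (((b τ : ℕ) : ℤ) - ((a τ : ℕ) : ℤ)) * Mz ^ enc τ
    with hG
  have hsub : F hs m b i - F hs m a i = ∑ τ : Fin s → Bool, G τ := by
    unfold F
    rw [← Finset.sum_sub_distrib]
    exact Finset.sum_congr rfl fun τ _ => by simp only [hG]; ring
  have hsplit : ∑ τ : Fin s → Bool, G τ = G τ0 + ∑ τ ∈ univ.erase τ0, G τ :=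
    (Finset.add_sum_erase _ _ (mem_univ τ0)).symm
  set R : ℤ := ∑ τ ∈ univ.erase τ0, G τ with hR
  -- bound |R|
  have hbound : |R| < Mz ^ enc τ0 := by
    have h1 : |R| ≤ ∑ τ ∈ univ.erase τ0, |G τ| := Finset.abs_sum_le_sum_abs _ _
    set S : Finset (Fin s → Bool) :=
      (univ.erase τ0).filter (fun τ => (a τ : ℕ) ≠ (b τ : ℕ)) with hS
    have h2 : ∑ τ ∈ S, |G τ| = ∑ τ ∈ univ.erase τ0, |G τ| := by
      apply Finset.sum_filter_of_ne
      intro τ _ hne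
      intro heq
      apply hne
      have hz : ((b τ : ℕ) : ℤ) - ((a τ : ℕ) : ℤ) = 0 := by
        rw [heq]; ring
      simp only [hG]
      rw [hz, mul_zero, zero_mul, abs_zero]
    have hterm : ∀ τ ∈ S, |G τ| ≤ (Mz - 1) * Mz ^ enc τ := by
      intro τ _
      have hlt1 : (a τ : ℕ) < M m - 1 := lt_of_lt_of_le (a τ).isLt (mm_le hs m τ)
      have hlt2 : (b τ : ℕ) < M m - 1 := lt_of_lt_of_le (b τ).isLt (mm_le hs m τ)
      have habs : |(((b τ : ℕ) : ℤ) - ((a τ : ℕ) : ℤ))| ≤ Mz - 1 := by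
        rw [hMz, abs_le]
        omega
      have hpow : (0:ℤ) ≤ Mz ^ enc τ := pow_nonneg (by linarith) _
      calc |G τ| = |(if τ i = true then (1:ℤ) else -1)| *
            |(((b τ : ℕ) : ℤ) - ((a τ : ℕ) : ℤ))| * |Mz ^ enc τ| := by
              simp only [hG, abs_mul]
        _ ≤ 1 * (Mz - 1) * Mz ^ enc τ := by
              have h1 : |(if τ i = true then (1:ℤ) else -1)| = 1 := by split <;> simp
              rw [h1, abs_of_nonneg hpow]
              exact mul_le_mul_of_nonneg_right (by simpa using habs) hpow
        _ = (Mz - 1) * Mz ^ enc τ := by ring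
    have h3 : ∑ τ ∈ S, |G τ| ≤ ∑ τ ∈ S, (Mz - 1) * Mz ^ enc τ :=
      Finset.sum_le_sum hterm
    have h4 : ∑ τ ∈ S, (Mz - 1) * Mz ^ enc τ
        = ∑ r ∈ S.image (enc (s := s)), (Mz - 1) * Mz ^ r := by
      rw [Finset.sum_image (fun x _ y _ h => enc_inj h)]
    have hsubset : S.image (enc (s := s)) ⊆ Finset.range (enc τ0) := by
      intro r hr
      obtain ⟨τ, hτS, rfl⟩ := Finset.mem_image.mp hr
      have hτne : τ ≠ τ0 := (Finset.mem_erase.mp (Finset.mem_filter.mp hτS).1).1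
      have hτD : τ ∈ D := by
        simp only [hD, Finset.mem_filter, mem_univ, true_and]
        exact (Finset.mem_filter.mp hτS).2
      have hle : enc τ ≤ enc τ0 := hmax τ hτD
      have hne : enc τ ≠ enc τ0 := fun h => hτne (enc_inj h)
      exact Finset.mem_range.mpr (lt_of_le_of_ne hle hne)
    have h5 : ∑ r ∈ S.image (enc (s := s)), (Mz - 1) * Mz ^ r
        ≤ ∑ r ∈ Finset.range (enc τ0), (Mz - 1) * Mz ^ r := by
      apply Finset.sum_le_sum_of_subset_of_nonneg hsubset
      intro r _ _
      exact mul_nonneg (by linarith) (pow_nonneg (by linarith) _)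
    have h6 : ∑ r ∈ Finset.range (enc τ0), (Mz - 1) * Mz ^ r = Mz ^ enc τ0 - 1 := by
      rw [← Finset.mul_sum]
      exact mul_geom_sum Mz _
    calc |R| ≤ ∑ τ ∈ univ.erase τ0, |G τ| := h1
      _ = ∑ τ ∈ S, |G τ| := h2.symm
      _ ≤ Mz ^ enc τ0 - 1 := by rw [h6] at h5; rw [h4] at h3; linarith
      _ < Mz ^ enc τ0 := by linarith
  -- apply dominance
  set x : ℤ := (if τ0 i = true then 1 else -1) * (((b τ0 : ℕ) : ℤ) - ((a τ0 : ℕ) : ℤ)) with hx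
  have hxne : x ≠ 0 := by
    simp only [hx, mul_ne_zero_iff]
    constructor
    · split <;> norm_num
    · intro h
      apply hτ0ne
      omega
  have hGτ0 : G τ0 = x * Mz ^ enc τ0 := by simp only [hG, hx]; try ring
  have hdiff : F hs m b i - F hs m a i = x * Mz ^ enc τ0 + R := by
    rw [hsub, hsplit, hGτ0]
  obtain ⟨hiff, hne0⟩ := dominant hxne hbound
  constructor
  · rw [show (F hs m a i < F hs m b i ↔ 0 < F hs m b i - F hs m a i) from
      ⟨fun h => by linarith, fun h => by linarith⟩, hdiff, hiff]
    simp only [hx]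
    split
    · constructor
      · intro h; omega
      · intro h
        have : ((a τ0 : ℕ) : ℤ) < ((b τ0 : ℕ) : ℤ) := by exact_mod_cast h
        nlinarith
    · constructor
      · intro h; nlinarith
      · intro h
        have : ((b τ0 : ℕ) : ℤ) < ((a τ0 : ℕ) : ℤ) := by exact_mod_cast h
        nlinarith
  · intro h
    apply hne0
    rw [← hdiff, h, sub_self]

noncomputable def NN : ℕ :=
  Fintype.card ((∀ τ : Fin s → Bool, Fin (mm hs m τ)) × Fin s)

noncomputable def ee : (∀ τ : Fin s → Bool, Fin (mm hs m τ)) × Fin s → ℕ :=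
  fun p => (Fintype.equivFin _ p : ℕ)

lemma ee_inj : Function.Injective (ee hs m) :=
  Fin.val_injective.comp (Fintype.equivFin _).injective

lemma ee_lt (p) : ee hs m p < NN hs m := (Fintype.equivFin _ p).isLt

noncomputable def z (a : ∀ τ : Fin s → Bool, Fin (mm hs m τ)) (i : Fin s) : ℝ :=
  (F hs m a i : ℝ) + (ee hs m (a, i) : ℝ) / (2 * NN hs m)

lemma NN_pos (a : ∀ τ : Fin s → Bool, Fin (mm hs m τ)) (i : Fin s) : 0 < NN hs m :=
  @Fintype.card_pos _ _ ⟨(a, i)⟩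

lemma eta_lt (a : ∀ τ : Fin s → Bool, Fin (mm hs m τ)) (i : Fin s) :
    (ee hs m (a, i) : ℝ) / (2 * NN hs m) < 1 / 2 := by
  have hN : (0:ℝ) < NN hs m := by exact_mod_cast NN_pos hs m a i
  rw [div_lt_div_iff₀ (by linarith) (by norm_num)]
  have := ee_lt hs m (a, i)
  have : (ee hs m (a, i) : ℝ) < NN hs m := by exact_mod_cast this
  linarith

lemma eta_nonneg (a : ∀ τ : Fin s → Bool, Fin (mm hs m τ)) (i : Fin s) :
    (0:ℝ) ≤ (ee hs m (a, i) : ℝ) / (2 * NN hs m) := by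
  have hN : (0:ℝ) < NN hs m := by exact_mod_cast NN_pos hs m a i
  positivity

lemma z_lt {a b : ∀ τ : Fin s → Bool, Fin (mm hs m τ)} {i j : Fin s}
    (h : F hs m a i < F hs m b j) : z hs m a i < z hs m b j := by
  have h1 : (F hs m a i : ℝ) + 1 ≤ (F hs m b j : ℝ) := by exact_mod_cast Int.add_one_le_iff.mpr h
  have h2 := eta_lt hs m a i
  have h3 := eta_nonneg hs m b j
  unfold z
  linarith

lemma z_coord_inj {a b : ∀ τ : Fin s → Bool, Fin (mm hs m τ)} {i j : Fin s}
    (h : z hs m a i = z hs m b j) : a = b ∧ i = j := by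
  by_cases hF : F hs m a i = F hs m b j
  · have hN : (0:ℝ) < NN hs m := by exact_mod_cast NN_pos hs m a i
    have hq : (ee hs m (a, i) : ℝ) / (2 * NN hs m) = (ee hs m (b, j) : ℝ) / (2 * NN hs m) := by
      unfold z at h
      rw [hF] at h
      linarith
    have heq : ee hs m (a, i) = ee hs m (b, j) := by
      field_simp at hq
      exact_mod_cast hq
    have := ee_inj hs m heq
    exact ⟨congrArg Prod.fst this, congrArg Prod.snd this⟩
  · rcases lt_or_gt_of_ne hF with h' | h'
    · exact absurd h (ne_of_lt (z_lt hs m h'))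
    · exact absurd h.symm (ne_of_lt (z_lt hs m h'))

lemma z_inj : Function.Injective (z hs m) := by
  intro a b h
  exact (z_coord_inj hs m (congrFun h ⟨0, hs⟩)).1

end Defs

end MES

/-- **Multi-dimensional Erdős–Szekeres theorem, tightness.** Here `τ : Fin s → Bool` encodes a
sign function (`true` = `+1`, `false` = `-1`), and a sequence of points is `τ`-monotone if its
`i`-th coordinates strictly increase when `τ i = true` and strictly decrease when `τ i = false`. -/
theorem multidim_erdos_szekeres_construction (s : ℕ) (hs : 0 < s)
    (m : (Fin s → Bool) → ℕ) (hm : ∀ τ, 0 < m τ) :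
    ∃ Z : Finset (Fin s → ℝ),
      Z.card = (∏ τ ∈ Finset.univ.filter (fun τ : Fin s → Bool => τ ⟨0, hs⟩ = true), m τ) ∧
      (∀ z ∈ Z, ∀ w ∈ Z, ∀ i j : Fin s, z i = w j → z = w ∧ i = j) ∧
      (∀ τ : Fin s → Bool, τ ⟨0, hs⟩ = true →
        ∀ t : ℕ, ∀ g : Fin t → (Fin s → ℝ), (∀ k, g k ∈ Z) →
          (∀ i : Fin s, if τ i = true then StrictMono (fun k => g k i)
            else StrictAnti (fun k => g k i)) →
          t ≤ m τ) := by
  classical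
  refine ⟨(Finset.univ : Finset (∀ τ : Fin s → Bool, Fin (MES.mm hs m τ))).image
    (MES.z hs m), ?_, ?_, ?_⟩
  · rw [Finset.card_image_of_injective _ (MES.z_inj hs m), Finset.card_univ, Fintype.card_pi]
    rw [Finset.prod_filter]
    apply Finset.prod_congr rfl
    intro τ _
    simp only [MES.mm, Fintype.card_fin]
    exact Fintype.card_fin _
  · intro p hp q hq i j hij
    obtain ⟨a, -, rfl⟩ := Finset.mem_image.mp hp
    obtain ⟨b, -, rfl⟩ := Finset.mem_image.mp hq
    obtain ⟨rfl, rfl⟩ := MES.z_coord_inj hs m hij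
    exact ⟨rfl, rfl⟩
  · intro τ hτ t g hg hmono
    choose a ha using fun k => Finset.mem_image.mp (hg k)
    have haz : ∀ k, MES.z hs m (a k) = g k := fun k => (ha k).2
    have key : ∀ k l : Fin t, k < l → ((a k) τ : ℕ) < ((a l) τ : ℕ) := by
      intro k l hkl
      have hne : a k ≠ a l := by
        intro h
        have hmono0 := hmono ⟨0, hs⟩
        rw [hτ] at hmono0
        simp only [if_true] at hmono0
        have hlt : g k ⟨0, hs⟩ < g l ⟨0, hs⟩ := hmono0 hkl
        rw [← haz k, ← haz l, h] at hlt
        exact lt_irrefl _ hlt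
      obtain ⟨τ0, hτ0true, hτ0ne, hτ0⟩ := MES.F_key hs m (a k) (a l) hne
      have hFord : ∀ i : Fin s, (τ i = true → MES.F hs m (a k) i < MES.F hs m (a l) i) ∧
          (τ i = false → MES.F hs m (a l) i < MES.F hs m (a k) i) := by
        intro i
        have hmi := hmono i
        constructor
        · intro hti
          rw [hti] at hmi
          simp only [if_true] at hmi
          have hz : MES.z hs m (a k) i < MES.z hs m (a l) i := by
            rw [haz k, haz l]; exact hmi hkl
          rcases lt_or_gt_of_ne ((hτ0 i).2) with h' | h'
          · exact h'
          · exact absurd hz (not_lt.mpr (le_of_lt (MES.z_lt hs m h')))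
        · intro hti
          rw [hti] at hmi
          simp only [Bool.false_eq_true, if_false] at hmi
          have hz : MES.z hs m (a l) i < MES.z hs m (a k) i := by
            rw [haz k, haz l]; exact hmi hkl
          rcases lt_or_gt_of_ne ((hτ0 i).2) with h' | h'
          · exact absurd hz (not_lt.mpr (le_of_lt (MES.z_lt hs m h')))
          · exact h'
      have h0 := ((hτ0 ⟨0, hs⟩).1).mp ((hFord ⟨0, hs⟩).1 hτ)
      rw [hτ0true] at h0
      simp only [if_true] at h0
      have hττ0 : τ0 = τ := by
        funext i
        cases hti : τ i with
        | false =>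
          have hlt := (hFord i).2 hti
          have hnot : ¬ (MES.F hs m (a k) i < MES.F hs m (a l) i) :=
            not_lt.mpr (le_of_lt hlt)
          rw [(hτ0 i).1] at hnot
          cases hti0 : τ0 i with
          | false => rfl
          | true => rw [hti0] at hnot; simp only [if_true] at hnot; omega
        | true =>
          have hlt := ((hτ0 i).1).mp ((hFord i).1 hti)
          cases hti0 : τ0 i with
          | true => rfl
          | false =>
            rw [hti0] at hlt
            simp only [Bool.false_eq_true, if_false] at hlt
            omega
      rw [hττ0] at h0
      exact h0
    have hsm : StrictMono (fun k : Fin t => ((a k) τ : ℕ)) := fun k l h => key k l h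
    have hinj : Function.Injective (fun k : Fin t => (a k) τ) := by
      intro k l h
      exact hsm.injective (congrArg Fin.val h)
    have hcard := Fintype.card_le_of_injective _ hinj
    simp only [Fintype.card_fin] at hcard
    have hmmτ : MES.mm hs m τ = m τ := by unfold MES.mm; rw [hτ]; rfl
    rw [hmmτ] at hcard
    exact hcard
end

section
/- Let r ≥ 1. For every collectable r-pattern P let m_P be a positive integer. Then there exists a collection H of pairwise disjoint r-element subsets of ℤ such that for every collectable r-pattern P every P-clique in H has size at most m_P, and |H| = max over all chains λ^{(1)} ≻ λ^{(2)} ≻ … ≻ λ^{(r)} of ordered partitions of r of the product ∏_{P ∈ 𝒫(λ^{(1)}) ∪ … ∪ 𝒫(λ^{(r)})} m_P. -/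
/-- A block `A^k B^k` (if `b = true`) or `B^k A^k` (if `b = false`), where `true` encodes
the letter A and `false` encodes the letter B. -/
def pblock (k : ℕ) (b : Bool) : List Bool :=
  if b then List.replicate k true ++ List.replicate k false
  else List.replicate k false ++ List.replicate k true

/-- An `r`-pattern: a string in `{A,B}^{2r}` starting with A, with `r` A's and `r` B's.
Here `true` encodes A and `false` encodes B. -/
def IsPattern (r : ℕ) (P : List Bool) : Prop :=
  P.length = 2 * r ∧ P.count true = r ∧ P.head? = some true

/-- The pattern determined by the pair of disjoint finite sets `(e, f)`: list the elements of
`e ∪ f` in increasing order and record membership in `e` (A = `true`) vs `f` (B = `false`). -/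
def patternOfPair (e f : Finset ℤ) : List Bool :=
  ((e ∪ f).sort (· ≤ ·)).map (fun x => decide (x ∈ e))

/-- The unordered pair `{e, f}` realizes the pattern `P`. -/
def Realizes (P : List Bool) (e f : Finset ℤ) : Prop :=
  patternOfPair e f = P ∨ patternOfPair f e = P

/-- A collection `S` is a `P`-clique if every pair of distinct members realizes the pattern `P`. -/
def IsPClique (P : List Bool) (S : Finset (Finset ℤ)) : Prop :=
  ∀ e ∈ S, ∀ f ∈ S, e ≠ f → Realizes P e f

/-- The collectable pattern with block sizes `2·lam 0, 2·lam 1, …` and block orientations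
given by `τ` (`true` = `A^k B^k`, `false` = `B^k A^k`). -/
def patternOfParts (lam : List ℕ) (τ : Fin lam.length → Bool) : List Bool :=
  (List.ofFn (fun i => pblock (lam.get i) (τ i))).flatten

/-- `𝒫(lam)`: the set of collectable patterns whose block partition has block sizes
`2·lam 0, 2·lam 1, …` in order (the first block must start with A). -/
def patternFinset (lam : List ℕ) : Finset (List Bool) :=
  (Finset.univ.filter (fun τ : Fin lam.length → Bool =>
      ∀ h : 0 < lam.length, τ ⟨0, h⟩ = true)).image (patternOfParts lam)

/-- An ordered partition of `r`: a list of positive integers summing to `r`. -/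
def IsOrderedPartition (r : ℕ) (lam : List ℕ) : Prop :=
  lam.sum = r ∧ ∀ k ∈ lam, 0 < k

/-- A pattern is collectable if it admits a block partition. -/
def Collectable (r : ℕ) (P : List Bool) : Prop :=
  ∃ lam : List ℕ, IsOrderedPartition r lam ∧ P ∈ patternFinset lam

/-- `Refines lam lam'` (i.e. `lam ≻ lam'`): `lam'` is obtained from `lam` by splitting
summands into consecutive sub-summands. -/
def Refines (lam lam' : List ℕ) : Prop :=
  ∃ ss : List (List ℕ), ss.flatten = lam' ∧ ss.map List.sum = lam ∧ ∀ g ∈ ss, g ≠ []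

/-- A chain `λ⁽¹⁾ ≻ λ⁽²⁾ ≻ … ≻ λ⁽ʳ⁾` of ordered partitions of `r`, where `λ⁽ˢ⁾` has `s` parts. -/
def IsPartitionChain (r : ℕ) (c : List (List ℕ)) : Prop :=
  c.length = r ∧ (∀ lam ∈ c, IsOrderedPartition r lam) ∧
    (∀ i, ∀ h : i < c.length, (c.get ⟨i, h⟩).length = i + 1) ∧
    List.Chain' Refines c

/-- The union `𝒫(λ⁽¹⁾) ∪ … ∪ 𝒫(λ⁽ʳ⁾)` of pattern sets along a chain. -/
def chainPatterns (c : List (List ℕ)) : Finset (List Bool) :=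
  c.foldr (fun lam acc => patternFinset lam ∪ acc) ∅


open List


/-- index of the block of `lam` containing position `i` -/
def blockIdx : List ℕ → ℕ → ℕ
  | [], _ => 0
  | k :: ks, i => if i < k then 0 else blockIdx ks (i - k) + 1

lemma blockIdx_le_length : ∀ (lam : List ℕ) (i : ℕ), blockIdx lam i ≤ lam.length
  | [], _ => by simp [blockIdx]
  | k :: ks, i => by
    simp only [blockIdx]
    split
    · simp
    · simpa using blockIdx_le_length ks (i - k)

lemma blockIdx_lt_length : ∀ (lam : List ℕ) (i : ℕ), i < lam.sum → blockIdx lam i < lam.length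
  | [], i => by simp
  | k :: ks, i => by
    intro h
    simp only [blockIdx]
    split
    · simp
    · have : i - k < ks.sum := by simp_all; omega
      simpa using blockIdx_lt_length ks (i - k) this

lemma blockIdx_mono : ∀ (lam : List ℕ) {i i' : ℕ}, i ≤ i' → blockIdx lam i ≤ blockIdx lam i'
  | [], _, _, _ => le_refl _
  | k :: ks, i, i', h => by
    simp only [blockIdx]
    split <;> split
    · rfl
    · simp
    · omega
    · simpa using blockIdx_mono ks (by omega)

lemma lt_of_blockIdx_lt {lam : List ℕ} {i i' : ℕ} (h : blockIdx lam i < blockIdx lam i') :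
    i < i' := by
  by_contra hc
  exact absurd (blockIdx_mono lam (by omega : i' ≤ i)) (by omega)

lemma blockIdx_append_of_lt : ∀ (g h : List ℕ) (i : ℕ), i < g.sum →
    blockIdx (g ++ h) i = blockIdx g i
  | [], h, i => by simp
  | k :: g, h, i => by
    intro hi
    simp only [cons_append, blockIdx]
    split
    · rfl
    · rw [blockIdx_append_of_lt g h (i - k) (by simp at hi ⊢; omega)]

lemma blockIdx_append_of_ge : ∀ (g h : List ℕ) (i : ℕ), g.sum ≤ i →
    blockIdx (g ++ h) i = g.length + blockIdx h (i - g.sum)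
  | [], h, i => by simp
  | k :: g, h, i => by
    intro hi
    simp only [cons_append, blockIdx]
    have hk : ¬ i < k := by simp at hi; omega
    rw [if_neg hk, blockIdx_append_of_ge g h (i - k) (by simp at hi ⊢; omega)]
    have harg : i - k - g.sum = i - (k + g.sum) := by omega
    rw [harg]
    simp only [sum_cons, length_cons]
    omega

lemma blockIdx_join : ∀ (ss : List (List ℕ)) (i : ℕ),
    blockIdx (ss.map List.sum) i = blockIdx (ss.map List.length) (blockIdx ss.flatten i)
  | [], i => by simp [blockIdx]
  | g :: ss, i => by
    simp only [map_cons, blockIdx, flatten_cons]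
    by_cases hi : i < g.sum
    · rw [if_pos hi]
      have h1 : blockIdx (g ++ ss.flatten) i = blockIdx g i := blockIdx_append_of_lt _ _ _ hi
      rw [h1, if_pos (blockIdx_lt_length g i hi)]
    · rw [if_neg hi]
      have h1 : blockIdx (g ++ ss.flatten) i = g.length + blockIdx ss.flatten (i - g.sum) :=
        blockIdx_append_of_ge _ _ _ (by omega)
      rw [h1, if_neg (by omega)]
      rw [blockIdx_join ss (i - g.sum)]
      congr 1
      congr 1
      omega

lemma blockIdx_replicate_one : ∀ (n i : ℕ), i < n → blockIdx (List.replicate n 1) i = i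
  | 0, i => by omega
  | n + 1, i => by
    intro h
    simp only [replicate, blockIdx]
    split
    · omega
    · rw [blockIdx_replicate_one n (i - 1) (by omega)]; omega

lemma length_le_sum_of_pos : ∀ (ks : List ℕ), (∀ j ∈ ks, 0 < j) → ks.length ≤ ks.sum
  | [], _ => by simp
  | a :: t, h => by
    simp only [length_cons, sum_cons]
    have h1 := h a (by simp)
    have h2 := length_le_sum_of_pos t (fun j hj => h j (by simp [hj]))
    omega

lemma eq_replicate_one_of_sum_eq_length : ∀ (lam : List ℕ), lam.sum = lam.length →
    (∀ k ∈ lam, 0 < k) → lam = List.replicate lam.length 1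
  | [], _, _ => by simp
  | k :: ks, h, hpos => by
    have hk : 0 < k := hpos k (by simp)
    have hks : ∀ j ∈ ks, 0 < j := fun j hj => hpos j (by simp [hj])
    have hsum : ks.length ≤ ks.sum := length_le_sum_of_pos ks hks
    simp only [sum_cons, length_cons] at h
    have hk1 : k = 1 := by omega
    have : ks.sum = ks.length := by omega
    rw [length_cons, replicate, hk1]
    congr 1
    exact eq_replicate_one_of_sum_eq_length ks this hks



theorem getD_eq_get_old {α : Type*} (l : List α) (d : α) {n : ℕ} (hn : n < l.length) :
    l.getD n d = l.get ⟨n, hn⟩ := List.getD_eq_getElem _ _ hn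

/-- positions belonging to block `j` -/
def blockPos (lam : List ℕ) (j : ℕ) : List ℕ :=
  (List.range (lam.getD j 0)).map (· + (lam.take j).sum)

lemma blockPos_length (lam : List ℕ) (j : ℕ) : (blockPos lam j).length = lam.getD j 0 := by
  simp [blockPos]

lemma blockPos_sorted (lam : List ℕ) (j : ℕ) : (blockPos lam j).Pairwise (· < ·) := by
  refine (List.pairwise_map).2 ?_
  exact (List.pairwise_lt_range (n := _)).imp (by omega)

lemma blockPos_join : ∀ (lam : List ℕ),
    (List.ofFn fun j : Fin lam.length => blockPos lam j).flatten = List.range lam.sum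
  | [] => by simp
  | k :: ks => by
    rw [show (k :: ks).length = ks.length + 1 from rfl, List.ofFn_succ]
    have h0 : blockPos (k :: ks) 0 = List.range k := by
      simp [blockPos]
    have hs : ∀ j : Fin ks.length, blockPos (k :: ks) (j.succ) = (blockPos ks j).map (· + k) := by
      intro j
      simp only [blockPos, List.map_map]
      have : (k :: ks).getD (j.succ : ℕ) 0 = ks.getD (j : ℕ) 0 := by
        simp [Fin.succ]
      rw [this]
      congr 1
      funext a
      simp only [Function.comp_apply]
      have : (k :: ks).take ((j : ℕ) + 1) = k :: ks.take (j : ℕ) := rfl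
      simp [Fin.succ, this]
      omega
    simp only [hs, h0, List.flatten_cons]
    have : (List.ofFn fun j : Fin ks.length => (blockPos ks j).map (· + k)) =
        (List.ofFn fun j : Fin ks.length => blockPos ks j).map (List.map (· + k)) := by
      rw [List.map_ofFn]; rfl
    rw [this, ← List.map_flatten, blockPos_join ks, List.sum_cons, List.range_add]
    congr 1
    apply List.map_congr_left
    intro a _
    omega

lemma takeSum_add_getD_le : ∀ (lam : List ℕ) (j : ℕ), j < lam.length →
    (lam.take j).sum + lam.getD j 0 ≤ lam.sum
  | [], j => by simp
  | k :: ks, 0 => by intro _; simp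
  | k :: ks, j + 1 => by
    intro h
    have := takeSum_add_getD_le ks j (by simpa using h)
    simp only [List.take_succ_cons, List.sum_cons, List.getD_cons_succ]
    omega

lemma blockIdx_of_range (lam : List ℕ) : ∀ (j : ℕ), j < lam.length → ∀ i,
    (lam.take j).sum ≤ i → i < (lam.take j).sum + lam.getD j 0 → blockIdx lam i = j := by
  induction lam with
  | nil => simp
  | cons k ks ih =>
    intro j hj i h1 h2
    cases j with
    | zero =>
      simp only [List.take_zero, List.sum_nil] at h1 h2
      simp only [blockIdx, if_pos (by simpa using h2)]
    | succ j =>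
      rw [show (k :: ks).take (j+1) = k :: ks.take j from rfl] at h1 h2
      rw [show (k :: ks).getD (j+1) 0 = ks.getD j 0 from rfl] at h2
      simp only [List.sum_cons] at h1 h2
      have hk : k ≤ i := by omega
      simp only [blockIdx, if_neg (show ¬ i < k by omega)]
      rw [ih j (by simpa using hj) (i - k) (by omega) (by omega)]

lemma blockPos_mem (lam : List ℕ) (j : ℕ) (hj : j < lam.length) {i : ℕ}
    (hi : i ∈ blockPos lam j) : blockIdx lam i = j ∧ i < lam.sum := by
  simp only [blockPos, List.mem_map, List.mem_range] at hi
  obtain ⟨a, ha, rfl⟩ := hi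
  constructor
  · exact blockIdx_of_range lam j hj _ (by omega) (by omega)
  · have := takeSum_add_getD_le lam j hj
    omega

section Helpers
open List

/-- `lam'`-blocks refine `lam`-blocks -/
def Factors (lam lam' : List ℕ) : Prop :=
  ∀ i i', blockIdx lam' i = blockIdx lam' i' → blockIdx lam i = blockIdx lam i'

lemma Factors.rfl' (lam : List ℕ) : Factors lam lam := fun _ _ h => h

lemma Factors.trans' {a b c : List ℕ} (h1 : Factors a b) (h2 : Factors b c) : Factors a c :=
  fun i i' h => h1 i i' (h2 i i' h)

lemma Refines.factors {lam lam' : List ℕ} (h : Refines lam lam') : Factors lam lam' := by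
  obtain ⟨ss, hjoin, hsum, -⟩ := h
  intro i i' hii
  have hjoin' : ss.flatten = lam' := hjoin
  rw [← hsum, blockIdx_join ss i, blockIdx_join ss i', hjoin', hii]

lemma chain'_factors {c : List (List ℕ)} (hc : List.Chain' Refines c) :
    ∀ s s' : ℕ, s ≤ s' → s' < c.length → Factors (c.getD s []) (c.getD s' []) := by
  intro s s' hss hs'
  induction s' with
  | zero =>
    have : s = 0 := by omega
    subst this; exact Factors.rfl' _
  | succ n ih =>
    rcases Nat.eq_or_lt_of_le hss with h | h
    · subst h; exact Factors.rfl' _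
    · have hn : n < c.length := by omega
      refine (ih (by omega) hn).trans' ?_
      have := List.isChain_iff_getElem.1 hc n (by omega)
      have hget : ∀ (j : ℕ) (hj : j < c.length), c.getD j [] = c.get ⟨j, hj⟩ := by
        intro j hj; exact getD_eq_get_old _ _ hj
      rw [hget n hn, hget (n+1) hs']
      exact this.factors

lemma geom_tail_sum {Dv : ℤ} (hD : 2 ≤ Dv) :
    ∀ J : ℕ, ∑ j ∈ Finset.range J, Dv^(j+1) ≤ 2*Dv^J := by
  intro J
  induction J with
  | zero => simp
  | succ J ih =>
    rw [Finset.sum_range_succ]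
    have h1 : (0:ℤ) < Dv ^ J := pow_pos (by omega) J
    have h2 : 2 * Dv ^ J ≤ Dv ^ (J + 1) := by
      rw [pow_succ, mul_comm (Dv ^ J) Dv]
      exact mul_le_mul_of_nonneg_right hD (by positivity)
    nlinarith [ih]

lemma tail_bound {Dv cb : ℤ} (hD : 2 ≤ Dv) (hc : 0 ≤ cb) (N k0 : ℕ) (hk : k0 < N)
    (F : ℕ → ℤ) (hF : ∀ k, k0 < k → k < N → |F k| ≤ cb) :
    |∑ k ∈ Finset.Ico (k0+1) N, Dv^(N-k) * F k| ≤ 2*cb*Dv^(N-1-k0) := by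
  have habs : |∑ k ∈ Finset.Ico (k0+1) N, Dv^(N-k) * F k| ≤
      ∑ k ∈ Finset.Ico (k0+1) N, Dv^(N-k) * |F k| := by
    refine (Finset.abs_sum_le_sum_abs _ _).trans ?_
    refine Finset.sum_le_sum ?_
    intro k _
    rw [abs_mul, abs_pow, abs_of_nonneg (by omega : (0:ℤ) ≤ Dv)]
  refine habs.trans ?_
  have h2 : ∑ k ∈ Finset.Ico (k0+1) N, Dv^(N-k) * |F k| ≤
      ∑ k ∈ Finset.Ico (k0+1) N, Dv^(N-k) * cb := by
    refine Finset.sum_le_sum ?_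
    intro k hk'
    simp only [Finset.mem_Ico] at hk'
    exact mul_le_mul_of_nonneg_left (hF k hk'.1 hk'.2) (by positivity)
  refine h2.trans ?_
  rw [← Finset.sum_mul]
  have hsum : ∑ k ∈ Finset.Ico (k0+1) N, Dv^(N-k) ≤ 2*Dv^(N-1-k0) := by
    rw [Finset.sum_Ico_eq_sum_range]
    set J := N - (k0+1) with hJ
    have hJ' : N - 1 - k0 = J := by omega
    rw [hJ']
    have hre : ∀ j ∈ Finset.range J, Dv ^ (N - (k0 + 1 + j)) = Dv ^ (J - j) := by
      intro j hj; congr 1; omega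
    rw [Finset.sum_congr rfl hre]
    have hrefl : ∑ j ∈ Finset.range J, Dv ^ (J - j) = ∑ j ∈ Finset.range J, Dv ^ (j+1) := by
      rw [← Finset.sum_range_reflect (fun j => Dv ^ (j+1)) J]
      refine Finset.sum_congr rfl ?_
      intro j hj
      simp only [Finset.mem_range] at hj
      congr 1
      omega
    rw [hrefl]
    exact geom_tail_sum hD J
  calc (∑ k ∈ Finset.Ico (k0+1) N, Dv^(N-k)) * cb ≤ (2*Dv^(N-1-k0)) * cb :=
        mul_le_mul_of_nonneg_right hsum hc
    _ = 2*cb*Dv^(N-1-k0) := by ring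

lemma pairwise_of_all {X : Type*} {R : X → X → Prop} : ∀ {l : List X},
    (∀ a ∈ l, ∀ b ∈ l, R a b) → l.Pairwise R
  | [], _ => List.Pairwise.nil
  | a :: l, h => by
    refine List.Pairwise.cons ?_ (pairwise_of_all fun x hx y hy => h x (by simp [hx]) y (by simp [hy]))
    intro b hb
    exact h a (by simp) b (by simp [hb])

lemma key_bind_pairwise {X : Type*} (key : X → ℕ) : ∀ (L : List ℕ), L.Pairwise (· < ·) →
    ∀ (f : ℕ → List X), (∀ s ∈ L, ∀ P ∈ f s, key P = s) →
    (L.flatMap f).Pairwise (fun P Q => key P ≤ key Q)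
  | [], _, f, _ => by simp
  | s :: L, hL, f, hkey => by
    rw [List.flatMap_cons, List.pairwise_append]
    refine ⟨?_, ?_, ?_⟩
    · refine pairwise_of_all ?_
      intro a ha b hb
      rw [hkey s (by simp) a ha, hkey s (by simp) b hb]
    · exact key_bind_pairwise key L hL.of_cons f
        (fun u hu P hP => hkey u (by simp [hu]) P hP)
    · intro a ha b hb
      rw [hkey s (by simp) a ha]
      rw [List.mem_flatMap] at hb
      obtain ⟨u, hu, hbu⟩ := hb
      rw [hkey u (by simp [hu]) b hbu]
      have := (List.pairwise_cons.1 hL).1 u hu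
      omega

lemma flatten_zip_perm {α : Type*} : ∀ (L1 L2 : List (List α)), L1.length = L2.length →
    (List.zipWith (· ++ ·) L1 L2).flatten.Perm (L1.flatten ++ L2.flatten)
  | [], [], _ => by simp
  | [], b :: L2, h => by simp at h
  | a :: L1, [], h => by simp at h
  | a :: L1, b :: L2, h => by
    simp only [List.zipWith_cons_cons, List.flatten_cons]
    have ih := flatten_zip_perm L1 L2 (by simpa using h)
    calc a ++ b ++ (List.zipWith (· ++ ·) L1 L2).flatten
        ~ a ++ b ++ (L1.flatten ++ L2.flatten) := ((ih).append_left _)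
      _ ~ a ++ (L1.flatten ++ (b ++ L2.flatten)) := by
          rw [List.append_assoc]
          refine List.Perm.append_left a ?_
          calc b ++ (L1.flatten ++ L2.flatten) = (b ++ L1.flatten) ++ L2.flatten := by
                rw [List.append_assoc]
            _ ~ (L1.flatten ++ b) ++ L2.flatten := (List.perm_append_comm.append_right _)
            _ = L1.flatten ++ (b ++ L2.flatten) := by rw [List.append_assoc]
      _ = a ++ L1.flatten ++ (b ++ L2.flatten) := by rw [List.append_assoc]

lemma ofFn_append_zipWith {α : Type*} {n : ℕ} (A B : Fin n → List α) :
    (List.ofFn fun j => A j ++ B j) = List.zipWith (· ++ ·) (List.ofFn A) (List.ofFn B) := by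
  refine List.ext_getElem ?_ ?_
  · simp
  · intro i h1 h2
    simp [List.getElem_zipWith]

lemma mem_chainPatterns {P : List Bool} : ∀ {c : List (List ℕ)},
    (P ∈ chainPatterns c ↔ ∃ lam ∈ c, P ∈ patternFinset lam)
  | [] => by simp [chainPatterns]
  | lam :: c => by
    have : chainPatterns (lam :: c) = patternFinset lam ∪ chainPatterns c := rfl
    rw [this]
    simp only [Finset.mem_union, List.mem_cons]
    constructor
    · rintro (h | h)
      · exact ⟨lam, Or.inl rfl, h⟩
      · obtain ⟨u, hu, hP⟩ := mem_chainPatterns.1 h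
        exact ⟨u, Or.inr hu, hP⟩
    · rintro ⟨u, (rfl | hu), hP⟩
      · exact Or.inl hP
      · exact Or.inr (mem_chainPatterns.2 ⟨u, hu, hP⟩)

lemma mem_patternFinset {lam : List ℕ} {P : List Bool} :
    P ∈ patternFinset lam ↔ ∃ τ : Fin lam.length → Bool,
      (∀ h : 0 < lam.length, τ ⟨0, h⟩ = true) ∧ patternOfParts lam τ = P := by
  simp only [patternFinset, Finset.mem_image, Finset.mem_filter, Finset.mem_univ, true_and]

lemma patternOfParts_head {lam : List ℕ} (hlam : lam ≠ []) (hpos : 0 < lam.getD 0 0)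
    {τ : Fin lam.length → Bool} (hτ : ∀ h : 0 < lam.length, τ ⟨0, h⟩ = true) :
    (patternOfParts lam τ).head? = some true := by
  match lam, hlam with
  | k :: ks, _ =>
    have e1 : patternOfParts (k :: ks) τ =
        (List.ofFn fun i : Fin (ks.length+1) => pblock ((k::ks).get i) (τ i)).flatten := rfl
    rw [e1, List.ofFn_succ, List.flatten_cons]
    have h0 : (0 : Fin (ks.length+1)) = ⟨0, Nat.succ_pos _⟩ := by
      ext; simp
    have hτ0 : τ (0 : Fin (ks.length+1)) = true := by
      rw [h0]; exact hτ (by simp)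
    have hget : (k :: ks).get (0 : Fin (ks.length+1)) = k := by
      rw [h0]; rfl
    rw [hget, hτ0]
    simp only [List.getD_cons_zero] at hpos
    obtain ⟨k', rfl⟩ : ∃ k', k = k' + 1 := ⟨k - 1, by omega⟩
    rw [pblock, if_pos rfl, List.replicate_succ]
    rfl

lemma head_true_of_patternFinset {lam : List ℕ} {P : List Bool} {r : ℕ} (hr : 1 ≤ r)
    (hpart : IsOrderedPartition r lam) (hP : P ∈ patternFinset lam) :
    P.head? = some true := by
  obtain ⟨τ, hτ, rfl⟩ := mem_patternFinset.1 hP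
  have hlam : lam ≠ [] := by
    rintro rfl; simp [IsOrderedPartition] at hpart; omega
  refine patternOfParts_head hlam ?_ hτ
  match lam, hlam with
  | k :: ks, _ =>
    have := hpart.2 k (by simp)
    simpa using this

end Helpers

section Construction
open List

variable (c : List (List ℕ)) (r : ℕ) (m : List Bool → ℕ)

open Classical in
/-- the level of pattern `P`: the finest index `s` with `P ∈ 𝒫(c_s)` -/
noncomputable def sIdx (P : List Bool) : ℕ :=
  Nat.findGreatest (fun s => P ∈ patternFinset (c.getD s [])) (r - 1)

/-- the partition associated to pattern `P` -/
noncomputable def lamP (P : List Bool) : List ℕ := c.getD (sIdx c r P) []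

open Classical in
/-- the orientation of the blocks of `P` -/
noncomputable def tauP (P : List Bool) : Fin (lamP c r P).length → Bool :=
  if h : ∃ τ : Fin (lamP c r P).length → Bool,
      (∀ h0 : 0 < (lamP c r P).length, τ ⟨0, h0⟩ = true) ∧ patternOfParts (lamP c r P) τ = P
  then h.choose else fun _ => true

open Classical in
/-- the priority list of all patterns, coarser levels first -/
noncomputable def Lp : List (List Bool) :=
  (List.range r).flatMap
    (fun s => ((chainPatterns c).filter (fun P => sIdx c r P = s)).toList)

noncomputable def NN : ℕ := (Lp c r).length
noncomputable def Pk (k : ℕ) : List Bool := (Lp c r).getD k []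

noncomputable def Mb : ℤ := 1 + ∑ P ∈ chainPatterns c, (m P : ℤ)
noncomputable def Gb : ℤ := 4 * Mb c m + 4
noncomputable def Cb : ℤ := Gb c m * r + 2 * Mb c m
noncomputable def Db : ℤ := 100 * (Cb c r m + 1)

open Classical in
noncomputable def tauB (P : List Bool) (j : ℕ) : Bool :=
  if h : j < (lamP c r P).length then tauP c r P ⟨j, h⟩ else true

noncomputable def sg (P : List Bool) (i : ℕ) : ℤ :=
  if tauB c r P (blockIdx (lamP c r P) i) then 1 else -1

noncomputable def coefF (P : List Bool) (i : ℕ) (tf : List Bool → ℤ) : ℤ :=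
  Gb c m * (blockIdx (lamP c r P) i : ℤ) + sg c r P i * tf P

noncomputable def xF (tf : List Bool → ℤ) (i : ℕ) : ℤ :=
  ∑ k ∈ Finset.range (NN c r), (Db c r m)^(NN c r - k) * coefF c r m (Pk c r k) i tf

noncomputable def edgeF (tf : List Bool → ℤ) : Finset ℤ := (Finset.range r).image (xF c r m tf)

def ValidT (tf : List Bool → ℤ) : Prop := ∀ P, 0 ≤ tf P ∧ tf P + 1 ≤ Mb c m

/- ------------- basic facts ------------- -/

variable {c r m}

lemma hMb1 : 1 ≤ Mb c m := by
  have : (0:ℤ) ≤ ∑ P ∈ chainPatterns c, (m P : ℤ) :=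
    Finset.sum_nonneg (fun P _ => by positivity)
  rw [Mb]; omega

lemma hMb2 {P : List Bool} (hP : P ∈ chainPatterns c) : (m P : ℤ) ≤ Mb c m - 1 := by
  rw [Mb]
  have h := Finset.single_le_sum (f := fun P => (m P : ℤ)) (fun Q _ => by positivity) hP
  omega

lemma hGb : Gb c m = 4 * Mb c m + 4 := rfl
lemma hGb_pos : 0 < Gb c m := by have := hMb1 (c := c) (m := m); rw [hGb]; omega
lemma hCb_pos : 0 ≤ Cb c r m := by
  have := hGb_pos (c := c) (m := m); have := hMb1 (c := c) (m := m)
  rw [Cb]; positivity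
lemma hDb : 2 ≤ Db c r m := by have := hCb_pos (c := c) (r := r) (m := m); rw [Db]; omega

section WithChain

variable (hr : 1 ≤ r) (hc : IsPartitionChain r c)

include hc in
lemma exists_level {P : List Bool} (hP : P ∈ chainPatterns c) :
    ∃ s, s < r ∧ P ∈ patternFinset (c.getD s []) := by
  obtain ⟨lam, hlam, hPf⟩ := mem_chainPatterns.1 hP
  obtain ⟨n, hn⟩ := List.mem_iff_get.1 hlam
  refine ⟨n, by rw [← hc.1]; exact n.2, ?_⟩
  rw [getD_eq_get_old _ _ n.2]
  simp only [Fin.eta, hn]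
  exact hPf

include hr hc in
lemma sIdx_lt {P : List Bool} (hP : P ∈ chainPatterns c) : sIdx c r P < r := by
  have h1 : sIdx c r P ≤ r - 1 := Nat.findGreatest_le _
  omega

include hr hc in
open Classical in
lemma sIdx_mem {P : List Bool} (hP : P ∈ chainPatterns c) :
    P ∈ patternFinset (lamP c r P) := by
  obtain ⟨s, hs, hmem⟩ := exists_level hc hP
  rw [lamP, sIdx]
  exact Nat.findGreatest_spec (P := fun u => P ∈ patternFinset (c.getD u [])) (m := s) (n := r - 1) (by omega) hmem

include hr hc in
open Classical in
lemma sIdx_max {P : List Bool} {s : ℕ} (hs : s < r) (hmem : P ∈ patternFinset (c.getD s [])) :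
    s ≤ sIdx c r P := by
  rw [sIdx]
  exact Nat.le_findGreatest (P := fun u => P ∈ patternFinset (c.getD u [])) (n := r - 1) (by omega) hmem

include hr hc in
lemma lamP_facts {P : List Bool} (hP : P ∈ chainPatterns c) :
    (lamP c r P).sum = r ∧ (∀ k ∈ lamP c r P, 0 < k) ∧
      (lamP c r P).length = sIdx c r P + 1 ∧ (lamP c r P).length ≤ r := by
  have hs := sIdx_lt hr hc hP
  have hlt : sIdx c r P < c.length := by rw [hc.1]; exact hs
  have hget : lamP c r P = c.get ⟨sIdx c r P, hlt⟩ := getD_eq_get_old _ _ hlt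
  have hmem : lamP c r P ∈ c := by rw [hget]; exact List.get_mem _ _
  have hop := hc.2.1 _ hmem
  have hlen : (lamP c r P).length = sIdx c r P + 1 := by rw [hget]; exact hc.2.2.1 _ hlt
  exact ⟨hop.1, hop.2, hlen, by omega⟩

include hr hc in
lemma tauP_spec {P : List Bool} (hP : P ∈ chainPatterns c) :
    (∀ h0 : 0 < (lamP c r P).length, tauP c r P ⟨0, h0⟩ = true) ∧
      patternOfParts (lamP c r P) (tauP c r P) = P := by
  have hmem := sIdx_mem hr hc hP
  obtain ⟨τ, hτ0, hτ⟩ := mem_patternFinset.1 hmem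
  rw [tauP, dif_pos ⟨τ, hτ0, hτ⟩]
  exact (Exists.choose_spec (⟨τ, hτ0, hτ⟩ :
    ∃ τ : Fin (lamP c r P).length → Bool,
      (∀ h0 : 0 < (lamP c r P).length, τ ⟨0, h0⟩ = true) ∧ patternOfParts (lamP c r P) τ = P))

include hr hc in
lemma mem_Lp {Q : List Bool} : Q ∈ Lp c r ↔ Q ∈ chainPatterns c := by
  rw [Lp, List.mem_flatMap]
  constructor
  · rintro ⟨s, hs, hQ⟩
    rw [Finset.mem_toList, Finset.mem_filter] at hQ
    exact hQ.1
  · intro hQ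
    exact ⟨sIdx c r Q, by simp [List.mem_range]; exact sIdx_lt hr hc hQ,
      by rw [Finset.mem_toList, Finset.mem_filter]; exact ⟨hQ, rfl⟩⟩

lemma Lp_nodup : (Lp c r).Nodup := by
  rw [Lp, List.nodup_flatMap]
  constructor
  · intro s _; exact Finset.nodup_toList _
  · refine (List.pairwise_lt_range (n := r)).imp ?_
    intro s s' hss
    intro Q hQ hQ'
    rw [Finset.mem_toList, Finset.mem_filter] at hQ hQ'
    omega

lemma Lp_sIdx_mono {k l : ℕ} (hkl : k < l) (hl : l < NN c r) :
    sIdx c r (Pk c r k) ≤ sIdx c r (Pk c r l) := by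
  have hpw : (Lp c r).Pairwise (fun P Q => sIdx c r P ≤ sIdx c r Q) := by
    rw [Lp]
    refine key_bind_pairwise _ _ (List.pairwise_lt_range (n := r)) _ ?_
    intro s _ P hP
    rw [Finset.mem_toList, Finset.mem_filter] at hP
    exact hP.2
  have hk : k < NN c r := by omega
  have := List.pairwise_iff_get.1 hpw ⟨k, hk⟩ ⟨l, hl⟩ hkl
  rw [Pk, Pk, getD_eq_get_old _ _ hk, getD_eq_get_old _ _ hl]
  exact this

lemma Pk_mem {k : ℕ} (hk : k < NN c r) : Pk c r k ∈ Lp c r := by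
  rw [Pk, getD_eq_get_old _ _ hk]
  exact List.get_mem _ _

include hr hc in
lemma Pk_mem_chain {k : ℕ} (hk : k < NN c r) : Pk c r k ∈ chainPatterns c :=
  (mem_Lp hr hc).1 (Pk_mem hk)

include hr hc in
lemma factors_of_le {k k0 : ℕ} (hkk : k ≤ k0) (hk0 : k0 < NN c r) :
    Factors (lamP c r (Pk c r k)) (lamP c r (Pk c r k0)) := by
  rcases Nat.eq_or_lt_of_le hkk with rfl | hlt
  · exact Factors.rfl' _
  · have h1 : sIdx c r (Pk c r k) ≤ sIdx c r (Pk c r k0) := Lp_sIdx_mono hlt hk0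
    have h2 : sIdx c r (Pk c r k0) < c.length := by
      rw [hc.1]; exact sIdx_lt hr hc (Pk_mem_chain hr hc hk0)
    exact chain'_factors hc.2.2.2 _ _ h1 h2

include hr hc in
lemma coef_abs_le {k : ℕ} (hk : k < NN c r) {i : ℕ} {tf : List Bool → ℤ}
    (hv : ValidT c m tf) : |coefF c r m (Pk c r k) i tf| ≤ Cb c r m := by
  have hP := Pk_mem_chain hr hc hk
  have hfacts := lamP_facts hr hc hP
  have hb : (blockIdx (lamP c r (Pk c r k)) i : ℤ) ≤ r := by
    have h1 := blockIdx_le_length (lamP c r (Pk c r k)) i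
    have := hfacts.2.2.2
    exact_mod_cast le_trans h1 this
  have hb0 : (0:ℤ) ≤ (blockIdx (lamP c r (Pk c r k)) i : ℤ) := by positivity
  have hG := hGb_pos (c := c) (m := m)
  have hM := hMb1 (c := c) (m := m)
  have htf := hv (Pk c r k)
  rw [coefF, Cb]
  have hsg : sg c r (Pk c r k) i = 1 ∨ sg c r (Pk c r k) i = -1 := by
    rw [sg]; split <;> simp
  have h1 : |Gb c m * (blockIdx (lamP c r (Pk c r k)) i : ℤ)| ≤ Gb c m * r := by
    rw [abs_of_nonneg (by positivity)]
    exact mul_le_mul_of_nonneg_left hb (le_of_lt hG)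
  have h2 : |sg c r (Pk c r k) i * tf (Pk c r k)| ≤ 2 * Mb c m := by
    rcases hsg with h | h <;> rw [h] <;> simp <;> rw [abs_of_nonneg htf.1] <;> omega
  calc |Gb c m * _ + sg c r (Pk c r k) i * tf (Pk c r k)| ≤ _ := abs_add_le _ _
    _ ≤ Gb c m * r + 2 * Mb c m := add_le_add h1 h2

end WithChain
end Construction

section Quant
open List

variable {c : List (List ℕ)} {r : ℕ} {m : List Bool → ℕ}

lemma sum_split (F : ℕ → ℤ) (k0 N : ℕ) (h : k0 < N) :
    ∑ k ∈ Finset.range N, F k =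
      ((∑ k ∈ Finset.range k0, F k) + F k0) + ∑ k ∈ Finset.Ico (k0+1) N, F k := by
  rw [Finset.range_eq_Ico, ← Finset.sum_Ico_consecutive F (Nat.zero_le (k0+1)) (by omega)]
  rw [← Finset.range_eq_Ico, Finset.sum_range_succ]

lemma sg_cases (P : List Bool) (i : ℕ) : sg c r P i = 1 ∨ sg c r P i = -1 := by
  rw [sg]; split <;> simp

lemma sg_eq_of_blockIdx_eq {P : List Bool} {i i' : ℕ}
    (h : blockIdx (lamP c r P) i = blockIdx (lamP c r P) i') : sg c r P i = sg c r P i' := by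
  rw [sg, sg, h]

lemma coef_eq_of_blockIdx_eq {P : List Bool} {i i' : ℕ} (tf : List Bool → ℤ)
    (h : blockIdx (lamP c r P) i = blockIdx (lamP c r P) i') :
    coefF c r m P i tf = coefF c r m P i' tf := by
  rw [coefF, coefF, h, sg_eq_of_blockIdx_eq h]

lemma x_sub_two (tf tf' : List Bool → ℤ) (i i' : ℕ) :
    xF c r m tf i' - xF c r m tf' i = ∑ k ∈ Finset.range (NN c r),
      (Db c r m)^(NN c r - k) *
        (coefF c r m (Pk c r k) i' tf - coefF c r m (Pk c r k) i tf') := by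
  rw [xF, xF, ← Finset.sum_sub_distrib]
  refine Finset.sum_congr rfl fun k _ => by ring

lemma x_sub_one (tf tf' : List Bool → ℤ) (i : ℕ) :
    xF c r m tf i - xF c r m tf' i = ∑ k ∈ Finset.range (NN c r),
      (Db c r m)^(NN c r - k) * (sg c r (Pk c r k) i * (tf (Pk c r k) - tf' (Pk c r k))) := by
  rw [x_sub_two]
  refine Finset.sum_congr rfl fun k _ => ?_
  rw [coefF, coefF]
  ring

section WithChain
variable (hr : 1 ≤ r) (hc : IsPartitionChain r c)

include hr hc in
lemma Q1 {tf tf' : List Bool → ℤ} (hv : ValidT c m tf) (hv' : ValidT c m tf')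
    {k0 : ℕ} (hk0 : k0 < NN c r) (hagree : ∀ l, l < k0 → tf (Pk c r l) = tf' (Pk c r l))
    (i : ℕ) :
    |xF c r m tf i - xF c r m tf' i - (Db c r m)^(NN c r - k0) *
      (sg c r (Pk c r k0) i * (tf (Pk c r k0) - tf' (Pk c r k0)))| ≤
      2 * (2 * Mb c m) * (Db c r m)^(NN c r - 1 - k0) := by
  rw [x_sub_one, sum_split _ k0 _ hk0]
  have hz : ∑ k ∈ Finset.range k0, (Db c r m)^(NN c r - k) *
      (sg c r (Pk c r k) i * (tf (Pk c r k) - tf' (Pk c r k))) = 0 := by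
    refine Finset.sum_eq_zero fun k hk => ?_
    rw [hagree k (Finset.mem_range.1 hk)]
    ring
  rw [hz, zero_add, add_sub_cancel_left]
  refine tail_bound hDb (by have := hMb1 (c := c) (m := m); omega) _ _ hk0 _ ?_
  intro k hk1 hk2
  rcases sg_cases (c := c) (r := r) (Pk c r k) i with h | h <;> rw [h]
  · rw [one_mul]
    have h1 := (hv (Pk c r k)).1; have h2 := (hv (Pk c r k)).2
    have h3 := (hv' (Pk c r k)).1; have h4 := (hv' (Pk c r k)).2
    rw [abs_le]; omega
  · rw [neg_one_mul, abs_neg]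
    have h1 := (hv (Pk c r k)).1; have h2 := (hv (Pk c r k)).2
    have h3 := (hv' (Pk c r k)).1; have h4 := (hv' (Pk c r k)).2
    rw [abs_le]; omega

include hr hc in
lemma Q2 {tf : List Bool → ℤ} (hv : ValidT c m tf)
    {k0 : ℕ} (hk0 : k0 < NN c r) {i i' : ℕ}
    (hbb : blockIdx (lamP c r (Pk c r k0)) i = blockIdx (lamP c r (Pk c r k0)) i') :
    |xF c r m tf i' - xF c r m tf i| ≤ 2 * (2 * Cb c r m) * (Db c r m)^(NN c r - 1 - k0) := by
  rw [x_sub_two]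
  have hz : ∀ k ∈ Finset.range (k0+1), (Db c r m)^(NN c r - k) *
      (coefF c r m (Pk c r k) i' tf - coefF c r m (Pk c r k) i tf) = 0 := by
    intro k hk
    have hkk : k ≤ k0 := by simpa using Nat.lt_succ_iff.1 (Finset.mem_range.1 hk)
    have hfac := factors_of_le hr hc hkk hk0 _ _ hbb.symm
    rw [coef_eq_of_blockIdx_eq tf hfac.symm]
    ring
  rw [sum_split _ k0 _ hk0]
  rw [Finset.sum_eq_zero (fun k hk => hz k (by simp only [Finset.mem_range] at hk ⊢; omega)),
    hz k0 (by simp), zero_add, zero_add]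
  refine tail_bound hDb (by have := hCb_pos (c := c) (r := r) (m := m); omega) _ _ hk0 _ ?_
  intro k hk1 hk2
  have h1 := coef_abs_le hr hc hk2 (i := i') hv
  have h2 := coef_abs_le hr hc hk2 (i := i) hv
  calc |coefF c r m (Pk c r k) i' tf - coefF c r m (Pk c r k) i tf| ≤ _ := abs_sub _ _
    _ ≤ 2 * Cb c r m := by omega

include hr hc in
lemma dk_nonneg {tg tg' : List Bool → ℤ} (hvg : ValidT c m tg) (hvg' : ValidT c m tg')
    {k : ℕ} (hk : k < NN c r) {i i' : ℕ} (hii : i ≤ i')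
    (hag : tg (Pk c r k) = tg' (Pk c r k) ∨
      blockIdx (lamP c r (Pk c r k)) i < blockIdx (lamP c r (Pk c r k)) i') :
    0 ≤ coefF c r m (Pk c r k) i' tg' - coefF c r m (Pk c r k) i tg ∧
    (blockIdx (lamP c r (Pk c r k)) i < blockIdx (lamP c r (Pk c r k)) i' →
      2 ≤ coefF c r m (Pk c r k) i' tg' - coefF c r m (Pk c r k) i tg) := by
  have hmono : blockIdx (lamP c r (Pk c r k)) i ≤ blockIdx (lamP c r (Pk c r k)) i' :=
    blockIdx_mono _ hii
  have hM := hMb1 (c := c) (m := m)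
  have hG := hGb (c := c) (m := m)
  rcases Nat.eq_or_lt_of_le hmono with heq | hlt
  · rcases hag with hag | hag
    · rw [coefF, coefF, heq, sg_eq_of_blockIdx_eq heq, hag]
      constructor
      · simp
      · intro h; omega
    · omega
  · have hg : (blockIdx (lamP c r (Pk c r k)) i : ℤ) + 1 ≤
        (blockIdx (lamP c r (Pk c r k)) i' : ℤ) := by exact_mod_cast hlt
    have b1 := (hvg (Pk c r k)).1; have b2 := (hvg (Pk c r k)).2
    have b3 := (hvg' (Pk c r k)).1; have b4 := (hvg' (Pk c r k)).2
    have hs1 := sg_cases (c := c) (r := r) (Pk c r k) i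
    have hs2 := sg_cases (c := c) (r := r) (Pk c r k) i'
    rw [coefF, coefF]
    have key : 2 ≤ Gb c m * (blockIdx (lamP c r (Pk c r k)) i' : ℤ) -
        Gb c m * (blockIdx (lamP c r (Pk c r k)) i : ℤ) +
        (sg c r (Pk c r k) i' * tg' (Pk c r k) - sg c r (Pk c r k) i * tg (Pk c r k)) := by
      have hgb : Gb c m ≤ Gb c m * (blockIdx (lamP c r (Pk c r k)) i' : ℤ) -
          Gb c m * (blockIdx (lamP c r (Pk c r k)) i : ℤ) := by
        have h0 : (0:ℤ) < Gb c m := hGb_pos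
        nlinarith
      have hb1 : -(Mb c m - 1) ≤ sg c r (Pk c r k) i' * tg' (Pk c r k) := by
        rcases hs2 with h | h <;> rw [h] <;> omega
      have hb2 : sg c r (Pk c r k) i * tg (Pk c r k) ≤ Mb c m - 1 := by
        rcases hs1 with h | h <;> rw [h] <;> omega
      omega
    constructor
    · omega
    · intro _; omega

include hr hc in
lemma Q3 {tg tg' : List Bool → ℤ} (hvg : ValidT c m tg) (hvg' : ValidT c m tg')
    {k0 : ℕ} (hk0 : k0 < NN c r) (hagree : ∀ l, l < k0 → tg (Pk c r l) = tg' (Pk c r l))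
    {i i' : ℕ}
    (hbb : blockIdx (lamP c r (Pk c r k0)) i < blockIdx (lamP c r (Pk c r k0)) i') :
    (Db c r m)^(NN c r - 1 - k0) ≤ xF c r m tg' i' - xF c r m tg i := by
  have hii : i < i' := lt_of_blockIdx_lt hbb
  rw [x_sub_two, sum_split _ k0 _ hk0]
  set E1 : ℤ := (Db c r m)^(NN c r - 1 - k0) with hE1
  have hE1pos : 0 < E1 := pow_pos (by have := hDb (c := c) (r := r) (m := m); omega) _
  have hWpos : ∀ k : ℕ, (0:ℤ) < (Db c r m)^(NN c r - k) :=
    fun k => pow_pos (by have := hDb (c := c) (r := r) (m := m); omega) _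
  -- terms below k0 are nonnegative
  have hnn : ∀ k ∈ Finset.range k0, 0 ≤ (Db c r m)^(NN c r - k) *
      (coefF c r m (Pk c r k) i' tg' - coefF c r m (Pk c r k) i tg) := by
    intro k hk
    have hk' : k < k0 := Finset.mem_range.1 hk
    have hnn0 := (dk_nonneg hr hc hvg hvg' (by omega) (le_of_lt hii)
      (Or.inl (hagree k hk'))).1
    exact mul_nonneg (le_of_lt (hWpos k)) hnn0
  -- main term
  have hmain : 2 * ((Db c r m) * E1) ≤ (Db c r m)^(NN c r - k0) *
      (coefF c r m (Pk c r k0) i' tg' - coefF c r m (Pk c r k0) i tg) := by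
    have hd := (dk_nonneg hr hc hvg hvg' hk0 (le_of_lt hii) (Or.inr hbb)).2 hbb
    have hW : (Db c r m)^(NN c r - k0) = (Db c r m) * E1 := by
      rw [hE1, ← pow_succ']
      congr 1
      omega
    rw [hW]
    have h0 : 0 < Db c r m * E1 := by
      have := hDb (c := c) (r := r) (m := m); positivity
    nlinarith
  -- tail
  have htail : |∑ k ∈ Finset.Ico (k0+1) (NN c r), (Db c r m)^(NN c r - k) *
      (coefF c r m (Pk c r k) i' tg' - coefF c r m (Pk c r k) i tg)| ≤
      2 * (2 * Cb c r m) * E1 := by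
    refine tail_bound hDb (by have := hCb_pos (c := c) (r := r) (m := m); omega) _ _ hk0 _ ?_
    intro k hk1 hk2
    have h1 := coef_abs_le hr hc hk2 (i := i') hvg'
    have h2 := coef_abs_le hr hc hk2 (i := i) hvg
    calc |coefF c r m (Pk c r k) i' tg' - coefF c r m (Pk c r k) i tg| ≤ _ := abs_sub _ _
      _ ≤ 2 * Cb c r m := by omega
  have hS1 : 0 ≤ ∑ k ∈ Finset.range k0, (Db c r m)^(NN c r - k) *
      (coefF c r m (Pk c r k) i' tg' - coefF c r m (Pk c r k) i tg) :=
    Finset.sum_nonneg hnn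
  have habs := (abs_le.1 htail).1
  have hDbE : 2 * (Db c r m) * E1 - 2 * (2 * Cb c r m) * E1 ≥ E1 := by
    have hD : Db c r m = 100 * (Cb c r m + 1) := rfl
    have hC := hCb_pos (c := c) (r := r) (m := m)
    nlinarith
  nlinarith
end WithChain
end Quant

section Quant2
open List
variable {c : List (List ℕ)} {r : ℕ} {m : List Bool → ℕ}
variable (hr : 1 ≤ r) (hc : IsPartitionChain r c)

include hr hc in
lemma Q4 {tf tf' : List Bool → ℤ} (hv : ValidT c m tf) (hv' : ValidT c m tf')
    {k0 : ℕ} (hk0 : k0 < NN c r) (hagree : ∀ l, l < k0 → tf (Pk c r l) = tf' (Pk c r l))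
    (hpos : 1 ≤ tf (Pk c r k0) - tf' (Pk c r k0)) {i i' : ℕ}
    (hbb : blockIdx (lamP c r (Pk c r k0)) i = blockIdx (lamP c r (Pk c r k0)) i') :
    1 ≤ sg c r (Pk c r k0) i * (xF c r m tf i' - xF c r m tf' i) := by
  set E1 : ℤ := (Db c r m)^(NN c r - 1 - k0) with hE1
  have hDbv := hDb (c := c) (r := r) (m := m)
  have hE1pos : 0 < E1 := pow_pos (by omega) _
  have ha := Q1 hr hc hv hv' hk0 hagree i'
  have hb := Q2 hr hc (tf := tf') hv' hk0 hbb
  have hsg : sg c r (Pk c r k0) i' = sg c r (Pk c r k0) i := sg_eq_of_blockIdx_eq hbb.symm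
  have hW : (Db c r m)^(NN c r - k0) = (Db c r m) * E1 := by
    rw [hE1, ← pow_succ']; congr 1; omega
  rw [hsg, hW] at ha
  have hMv := hMb1 (c := c) (m := m)
  have hCv := hCb_pos (c := c) (r := r) (m := m)
  have hMC : 2 * Mb c m ≤ Cb c r m := by
    rw [Cb]
    have h0 : (0:ℤ) ≤ Gb c m * r := by
      have := hGb_pos (c := c) (m := m); positivity
    omega
  have hD : Db c r m = 100 * (Cb c r m + 1) := rfl
  have hE1one : (1:ℤ) ≤ E1 := by omega
  have h0 : (0:ℤ) ≤ Db c r m * E1 := mul_nonneg (by omega) (le_of_lt hE1pos)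
  have hDelta : Db c r m * E1 ≤ Db c r m * E1 * (tf (Pk c r k0) - tf' (Pk c r k0)) := by
    nlinarith
  have key : 1 ≤ Db c r m * E1 - 2*(2*Mb c m)*E1 - 2*(2*Cb c r m)*E1 := by
    have hcoef : 1 + 4*Mb c m + 4*Cb c r m + 1 ≤ Db c r m := by omega
    nlinarith
  have h1 := (abs_le.1 ha).1
  have h2 := (abs_le.1 ha).2
  have h3 := (abs_le.1 hb).1
  have h4 := (abs_le.1 hb).2
  have hsplit : xF c r m tf i' - xF c r m tf' i =
      (xF c r m tf i' - xF c r m tf' i') + (xF c r m tf' i' - xF c r m tf' i) := by ring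
  rcases sg_cases (c := c) (r := r) (P := Pk c r k0) (i := i) with h | h <;> rw [h] at h1 h2 ⊢
  · rw [one_mul, hsplit]
    rw [one_mul] at h1 h2
    linarith
  · rw [neg_one_mul, hsplit]
    rw [neg_one_mul] at h1 h2
    linarith

include hr hc in
lemma finest_exists : ∃ k, k < NN c r ∧ ∀ i, i < r → blockIdx (lamP c r (Pk c r k)) i = i := by
  classical
  set lam0 := c.getD (r-1) [] with hlam0
  have hlt : r - 1 < c.length := by rw [hc.1]; omega
  have hmem : lam0 ∈ c := by
    rw [hlam0, getD_eq_get_old _ _ hlt]; exact List.get_mem _ _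
  have hop := hc.2.1 _ hmem
  have hlen : lam0.length = r := by
    rw [hlam0]
    have := hc.2.2.1 (r-1) hlt
    rw [getD_eq_get_old _ _ hlt, this]
    omega
  set P0 := patternOfParts lam0 (fun _ => true) with hP0
  have hP0mem : P0 ∈ patternFinset lam0 := mem_patternFinset.2 ⟨fun _ => true, fun _ => rfl, rfl⟩
  have hP0U : P0 ∈ chainPatterns c := mem_chainPatterns.2 ⟨lam0, hmem, hP0mem⟩
  have hs1 : r - 1 ≤ sIdx c r P0 := sIdx_max hr hc (by omega) hP0mem
  have hs2 : sIdx c r P0 < r := sIdx_lt hr hc hP0U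
  have hseq : sIdx c r P0 = r - 1 := by omega
  have hlamP : lamP c r P0 = lam0 := by rw [lamP, hseq]
  have hrep : lam0 = List.replicate r 1 := by
    have h1 : lam0.sum = lam0.length := by rw [hlen, hop.1]
    have := eq_replicate_one_of_sum_eq_length lam0 h1 hop.2
    rw [this, hlen]
  obtain ⟨n, hn⟩ := List.mem_iff_get.1 ((mem_Lp hr hc).2 hP0U)
  refine ⟨n, n.2, ?_⟩
  intro i hi
  have hPn : Pk c r n = P0 := by
    rw [Pk, getD_eq_get_old _ _ n.2]
    simp only [Fin.eta, hn]
  rw [hPn, hlamP, hrep, blockIdx_replicate_one r i hi]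

include hr hc in
lemma x_lt {tf : List Bool → ℤ} (hv : ValidT c m tf) {i i' : ℕ}
    (hii : i < i') (hi' : i' < r) : xF c r m tf i < xF c r m tf i' := by
  obtain ⟨ks, hks, hid⟩ := finest_exists hr hc
  have hbb : blockIdx (lamP c r (Pk c r ks)) i < blockIdx (lamP c r (Pk c r ks)) i' := by
    rw [hid i (by omega), hid i' hi']; exact hii
  have hsub := x_sub_two (c := c) (r := r) (m := m) tf tf i i'
  have hDbv := hDb (c := c) (r := r) (m := m)
  have hnn : ∀ k ∈ Finset.range (NN c r), 0 ≤ (Db c r m)^(NN c r - k) *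
      (coefF c r m (Pk c r k) i' tf - coefF c r m (Pk c r k) i tf) := by
    intro k hk
    have hd := (dk_nonneg hr hc hv hv (Finset.mem_range.1 hk) (le_of_lt hii) (Or.inl rfl)).1
    exact mul_nonneg (le_of_lt (pow_pos (by omega) _)) hd
  have hd2 := (dk_nonneg hr hc hv hv hks (le_of_lt hii) (Or.inr hbb)).2 hbb
  have hterm : 0 < (Db c r m)^(NN c r - ks) *
      (coefF c r m (Pk c r ks) i' tf - coefF c r m (Pk c r ks) i tf) := by
    have := pow_pos (show (0:ℤ) < Db c r m by omega) (NN c r - ks)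
    nlinarith
  have hsum := Finset.single_le_sum hnn (Finset.mem_range.2 hks)
  omega

include hr hc in
lemma x_ne {tf tf' : List Bool → ℤ} (hv : ValidT c m tf) (hv' : ValidT c m tf')
    {k0 : ℕ} (hk0 : k0 < NN c r) (hagree : ∀ l, l < k0 → tf (Pk c r l) = tf' (Pk c r l))
    (hpos : 1 ≤ tf (Pk c r k0) - tf' (Pk c r k0)) (a b : ℕ) :
    xF c r m tf a ≠ xF c r m tf' b := by
  have hDbv := hDb (c := c) (r := r) (m := m)
  have hE1pos : (0:ℤ) < (Db c r m)^(NN c r - 1 - k0) := pow_pos (by omega) _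
  rcases lt_trichotomy (blockIdx (lamP c r (Pk c r k0)) a) (blockIdx (lamP c r (Pk c r k0)) b)
    with h | h | h
  · have := Q3 hr hc hv hv' hk0 hagree h
    intro hEq; rw [hEq] at this; omega
  · have := Q4 hr hc hv hv' hk0 hagree hpos (i := b) (i' := a) h.symm
    rcases sg_cases (c := c) (r := r) (P := Pk c r k0) (i := b) with hs | hs <;>
      rw [hs] at this <;> intro hEq <;> rw [hEq] at this <;> omega
  · have := Q3 hr hc (tg := tf') (tg' := tf) hv' hv hk0
      (fun l hl => (hagree l hl).symm) h
    intro hEq; rw [hEq] at this; omega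
end Quant2

section PairPattern
open List

lemma flatten_perm_append {α : Type*} : ∀ {n : ℕ} (A B C : Fin n → List α),
    (∀ j, (C j).Perm (A j ++ B j)) →
    ((List.ofFn C).flatten).Perm ((List.ofFn A).flatten ++ (List.ofFn B).flatten)
  | 0, A, B, C, h => by simp
  | n + 1, A, B, C, h => by
    rw [List.ofFn_succ, List.ofFn_succ (f := A), List.ofFn_succ (f := B), List.flatten_cons,
      List.flatten_cons, List.flatten_cons]
    have ih := flatten_perm_append (fun j => A j.succ) (fun j => B j.succ)
      (fun j => C j.succ) (fun j => h j.succ)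
    set JA := (List.ofFn fun j : Fin n => A j.succ).flatten
    set JB := (List.ofFn fun j : Fin n => B j.succ).flatten
    calc C 0 ++ (List.ofFn fun j : Fin n => C j.succ).flatten
        ~ (A 0 ++ B 0) ++ (JA ++ JB) := List.Perm.append (h 0) ih
      _ ~ A 0 ++ (JA ++ (B 0 ++ JB)) := by
          rw [List.append_assoc]
          refine List.Perm.append_left _ ?_
          calc B 0 ++ (JA ++ JB) = (B 0 ++ JA) ++ JB := by rw [List.append_assoc]
            _ ~ (JA ++ B 0) ++ JB := List.perm_append_comm.append_right _
            _ = JA ++ (B 0 ++ JB) := by rw [List.append_assoc]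
      _ = A 0 ++ JA ++ (B 0 ++ JB) := by rw [List.append_assoc]

variable {c : List (List ℕ)} {r : ℕ} {m : List Bool → ℕ}
variable (hr : 1 ≤ r) (hc : IsPartitionChain r c)

include hr hc in
lemma pair_pattern {tf tf' : List Bool → ℤ} (hv : ValidT c m tf) (hv' : ValidT c m tf')
    {k0 : ℕ} (hk0 : k0 < NN c r) (hagree : ∀ l, l < k0 → tf (Pk c r l) = tf' (Pk c r l))
    (hpos : 1 ≤ tf (Pk c r k0) - tf' (Pk c r k0)) :
    patternOfPair (edgeF c r m tf') (edgeF c r m tf) = Pk c r k0 ∧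
      Disjoint (edgeF c r m tf') (edgeF c r m tf) := by
  classical
  have hPU : Pk c r k0 ∈ chainPatterns c := Pk_mem_chain hr hc hk0
  have hfacts := lamP_facts hr hc hPU
  set lam := lamP c r (Pk c r k0) with hlamdef
  set ebl : Fin lam.length → List ℤ := fun j => (blockPos lam j).map (xF c r m tf') with hebl
  set fbl : Fin lam.length → List ℤ := fun j => (blockPos lam j).map (xF c r m tf) with hfbl
  set blkl : Fin lam.length → List ℤ := fun j =>
    if tauB c r (Pk c r k0) j then ebl j ++ fbl j else fbl j ++ ebl j with hblkl
  set LL := (List.ofFn blkl).flatten with hLLdef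
  -- membership facts
  have hposmem : ∀ (j : Fin lam.length) (i : ℕ), i ∈ blockPos lam j →
      blockIdx lam i = j ∧ i < r := by
    intro j i hi
    have h := blockPos_mem lam j j.2 hi
    rw [hfacts.1] at h
    exact h
  have hsgj : ∀ (j : Fin lam.length) (i : ℕ), i ∈ blockPos lam j →
      sg c r (Pk c r k0) i = (if tauB c r (Pk c r k0) (j : ℕ) then 1 else -1) := by
    intro j i hi
    rw [sg, ← hlamdef, (hposmem j i hi).1]
  have hxne : ∀ a b : ℕ, xF c r m tf a ≠ xF c r m tf' b :=
    fun a b => x_ne hr hc hv hv' hk0 hagree hpos a b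
  -- sortedness
  have hE1pos : (0:ℤ) < (Db c r m)^(NN c r - 1 - k0) :=
    pow_pos (by have := hDb (c := c) (r := r) (m := m); omega) _
  have hsortE : ∀ (tg : List Bool → ℤ), ValidT c m tg → ∀ (j : Fin lam.length),
      ((blockPos lam j).map (xF c r m tg)).Pairwise (· < ·) := by
    intro tg hvg j
    rw [List.pairwise_map]
    refine (blockPos_sorted lam j).imp_of_mem ?_
    intro a b ha hb hab
    exact x_lt hr hc hvg hab (hposmem j b hb).2
  have hcross : ∀ (j : Fin lam.length), ∀ z ∈ ebl j, ∀ z' ∈ fbl j,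
      (tauB c r (Pk c r k0) (j : ℕ) = true → z < z') ∧
      (tauB c r (Pk c r k0) (j : ℕ) = false → z' < z) := by
    intro j z hz z' hz'
    rw [hebl, List.mem_map] at hz
    rw [hfbl, List.mem_map] at hz'
    obtain ⟨i, hi, rfl⟩ := hz
    obtain ⟨i', hi', rfl⟩ := hz'
    have hbb : blockIdx lam i = blockIdx lam i' := by
      rw [(hposmem j i hi).1, (hposmem j i' hi').1]
    have hq := Q4 hr hc hv hv' hk0 hagree hpos (i := i) (i' := i') (by rw [← hlamdef]; exact hbb)
    have hsgv := hsgj j i hi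
    constructor
    · intro hτ; rw [hτ, if_pos rfl] at hsgv; rw [hsgv, one_mul] at hq; omega
    · intro hτ; rw [hτ] at hsgv; simp only [Bool.false_eq_true, if_neg] at hsgv
      rw [show (if False then (1:ℤ) else -1) = -1 by simp] at hsgv
      rw [hsgv, neg_one_mul] at hq; omega
  have hsorted : LL.Pairwise (· < ·) := by
    rw [hLLdef, List.pairwise_flatten]
    constructor
    · intro l hl
      rw [List.mem_ofFn] at hl
      obtain ⟨j, rfl⟩ := hl
      by_cases hτ : tauB c r (Pk c r k0) (j : ℕ) = true
      · have hbl : blkl j = ebl j ++ fbl j := by rw [hblkl]; simp [hτ]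
        rw [hbl, List.pairwise_append]
        exact ⟨hsortE tf' hv' j, hsortE tf hv j,
          fun z hz z' hz' => (hcross j z hz z' hz').1 hτ⟩
      · have hbl : blkl j = fbl j ++ ebl j := by rw [hblkl]; simp [hτ]
        rw [hbl, List.pairwise_append]
        exact ⟨hsortE tf hv j, hsortE tf' hv' j,
          fun z' hz' z hz => (hcross j z hz z' hz').2 (by simpa using hτ)⟩
    · rw [List.pairwise_ofFn]
      intro j j' hjj z hz z' hz'
      have hmem : ∀ (jj : Fin lam.length) (w : ℤ), w ∈ blkl jj →
          ∃ (tg : List Bool → ℤ) (i : ℕ), ValidT c m tg ∧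
            (∀ l, l < k0 → tg (Pk c r l) = tf (Pk c r l)) ∧
            i ∈ blockPos lam jj ∧ w = xF c r m tg i := by
        intro jj w hw
        have hw3 : w ∈ ebl jj ∨ w ∈ fbl jj := by
          by_cases hτ : tauB c r (Pk c r k0) (jj : ℕ) = true
          · have hbl : blkl jj = ebl jj ++ fbl jj := by rw [hblkl]; simp [hτ]
            rw [hbl] at hw
            exact List.mem_append.1 hw
          · have hbl : blkl jj = fbl jj ++ ebl jj := by rw [hblkl]; simp [hτ]
            rw [hbl] at hw
            exact (List.mem_append.1 hw).symm
        rcases hw3 with hw' | hw'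
        · rw [hebl, List.mem_map] at hw'
          obtain ⟨i, hi, rfl⟩ := hw'
          exact ⟨tf', i, hv', fun l hl => (hagree l hl).symm, hi, rfl⟩
        · rw [hfbl, List.mem_map] at hw'
          obtain ⟨i, hi, rfl⟩ := hw'
          exact ⟨tf, i, hv, fun _ _ => rfl, hi, rfl⟩
      obtain ⟨tg, i, hvg, hagg, hig, rfl⟩ := hmem j z hz
      obtain ⟨tg', i', hvg', hagg', hig', rfl⟩ := hmem j' z' hz'
      have hbb : blockIdx lam i < blockIdx lam i' := by
        rw [(hposmem j i hig).1, (hposmem j' i' hig').1]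
        exact hjj
      have := Q3 hr hc (tg := tg) (tg' := tg') hvg hvg' hk0
        (fun l hl => by rw [hagg l hl, hagg' l hl]) (by rw [← hlamdef]; exact hbb)
      omega
  -- injectivity of points within one edge
  have hinj : ∀ (tg : List Bool → ℤ), ValidT c m tg →
      Set.InjOn (xF c r m tg) (Finset.range r) := by
    intro tg hvg a ha b hb hab
    simp only [Finset.coe_range, Set.mem_Iio] at ha hb
    by_contra hne
    rcases Nat.lt_or_ge a b with h | h
    · exact absurd hab (ne_of_lt (x_lt hr hc hvg h hb))
    · have : b < a := by omega
      exact absurd hab.symm (ne_of_lt (x_lt hr hc hvg this ha))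
  -- disjointness
  have hdisj : Disjoint (edgeF c r m tf') (edgeF c r m tf) := by
    rw [Finset.disjoint_left]
    intro z hz hz'
    rw [edgeF, Finset.mem_image] at hz hz'
    obtain ⟨a, _, rfl⟩ := hz
    obtain ⟨b, _, hzz⟩ := hz'
    exact hxne b a hzz
  -- the permutation
  have hval : ∀ (tg : List Bool → ℤ), ValidT c m tg →
      (edgeF c r m tg).val = ((List.range r).map (xF c r m tg) : Multiset ℤ) := by
    intro tg hvg
    rw [edgeF, Finset.image_val_of_injOn (hinj tg hvg), Finset.range_val,
      Multiset.range, Multiset.map_coe]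
  have hflatten : ∀ (tg : List Bool → ℤ),
      (List.ofFn fun j : Fin lam.length => (blockPos lam j).map (xF c r m tg)).flatten =
        (List.range r).map (xF c r m tg) := by
    intro tg
    have h1 : (List.ofFn fun j : Fin lam.length => (blockPos lam j).map (xF c r m tg)) =
        (List.ofFn fun j : Fin lam.length => blockPos lam j).map (List.map (xF c r m tg)) :=
      List.map_ofFn.symm
    rw [h1, ← List.map_flatten, blockPos_join, hfacts.1]
  have hperm : LL.Perm (((edgeF c r m tf' ∪ edgeF c r m tf)).sort (· ≤ ·)) := by
    have p1 : LL.Perm ((List.ofFn ebl).flatten ++ (List.ofFn fbl).flatten) := by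
      rw [hLLdef]
      refine flatten_perm_append ebl fbl blkl ?_
      intro j
      by_cases hτ : tauB c r (Pk c r k0) (j : ℕ) = true
      · have hbl : blkl j = ebl j ++ fbl j := by rw [hblkl]; simp [hτ]
        rw [hbl]
      · have hbl : blkl j = fbl j ++ ebl j := by rw [hblkl]; simp [hτ]
        rw [hbl]
        exact List.perm_append_comm
    have p2 : (List.ofFn ebl).flatten = (List.range r).map (xF c r m tf') := hflatten tf'
    have p3 : (List.ofFn fbl).flatten = (List.range r).map (xF c r m tf) := hflatten tf
    have p4 : ((edgeF c r m tf' ∪ edgeF c r m tf)).sort (· ≤ ·) ~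
        ((List.range r).map (xF c r m tf') ++ (List.range r).map (xF c r m tf)) := by
      refine (Finset.sort_perm_toList _ _).trans ?_
      rw [← Multiset.coe_eq_coe, Finset.coe_toList]
      rw [← Finset.disjUnion_eq_union _ _ hdisj]
      have hdu : ((edgeF c r m tf').disjUnion (edgeF c r m tf) hdisj).val =
          (edgeF c r m tf').val + (edgeF c r m tf).val := rfl
      rw [hdu, hval tf' hv', hval tf hv, ← Multiset.coe_add]
    rw [p2, p3] at p1
    exact p1.trans p4.symm
  -- LL equals the sorted list
  have hsortLL : LL = ((edgeF c r m tf' ∪ edgeF c r m tf)).sort (· ≤ ·) := by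
    refine List.Perm.eq_of_pairwise' ?_ (Finset.pairwise_sort _ _) hperm
    exact List.Pairwise.imp le_of_lt hsorted
  -- compute the pattern
  have hτspec := tauP_spec hr hc hPU
  refine ⟨?_, hdisj⟩
  rw [patternOfPair, ← hsortLL, hLLdef, List.map_flatten, List.map_ofFn]
  have hblockpat : ∀ j : Fin lam.length,
      (List.map (fun z => decide (z ∈ edgeF c r m tf')) ∘ blkl) j =
        pblock (lam.get j) (tauP c r (Pk c r k0) j) := by
    intro j
    have hmeme : ∀ i ∈ blockPos lam j,
        (decide (xF c r m tf' i ∈ edgeF c r m tf') : Bool) = true := by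
      intro i hi
      rw [decide_eq_true_eq, edgeF, Finset.mem_image]
      exact ⟨i, Finset.mem_range.2 (hposmem j i hi).2, rfl⟩
    have hmemf : ∀ i ∈ blockPos lam j,
        (decide (xF c r m tf i ∈ edgeF c r m tf') : Bool) = false := by
      intro i hi
      simp only [decide_eq_false_iff_not, edgeF, Finset.mem_image]
      rintro ⟨a, _, hzz⟩
      exact hxne i a hzz.symm
    have heblrep : (ebl j).map (fun z => decide (z ∈ edgeF c r m tf')) =
        List.replicate (lam.get j) true := by
      rw [List.eq_replicate_iff]
      constructor
      · rw [hebl, List.length_map, List.length_map, blockPos_length,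
          getD_eq_get_old lam 0 j.2]
      · intro b hb
        rw [hebl, List.map_map, List.mem_map] at hb
        obtain ⟨i, hi, rfl⟩ := hb
        exact hmeme i hi
    have hfblrep : (fbl j).map (fun z => decide (z ∈ edgeF c r m tf')) =
        List.replicate (lam.get j) false := by
      rw [List.eq_replicate_iff]
      constructor
      · rw [hfbl, List.length_map, List.length_map, blockPos_length,
          getD_eq_get_old lam 0 j.2]
      · intro b hb
        rw [hfbl, List.map_map, List.mem_map] at hb
        obtain ⟨i, hi, rfl⟩ := hb
        exact hmemf i hi
    have htB : tauB c r (Pk c r k0) (j : ℕ) = tauP c r (Pk c r k0) j := by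
      have hj : ((j : ℕ)) < (lamP c r (Pk c r k0)).length := j.2
      rw [tauB, dif_pos hj]
    simp only [Function.comp_apply]
    by_cases hτ : tauB c r (Pk c r k0) (j : ℕ) = true
    · have hbl : blkl j = ebl j ++ fbl j := by rw [hblkl]; simp [hτ]
      rw [hbl, List.map_append, heblrep, hfblrep, pblock, if_pos (by rw [← htB]; exact hτ)]
    · have hbl : blkl j = fbl j ++ ebl j := by rw [hblkl]; simp [hτ]
      rw [hbl, List.map_append, heblrep, hfblrep, pblock,
        if_neg (by rw [← htB]; simpa using hτ)]
  have hfun : (List.map (fun z => decide (z ∈ edgeF c r m tf')) ∘ blkl) =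
      (fun j => pblock (lam.get j) (tauP c r (Pk c r k0) j)) := funext hblockpat
  rw [hfun]
  exact hτspec.2

end PairPattern

section Assembly
open List

/-- the canonical chain `(r) ≻ (r-1,1) ≻ ⋯ ≻ (1,…,1)` -/
def canonChain (r : ℕ) : List (List ℕ) :=
  (List.range r).map (fun s => (r - s) :: List.replicate s 1)

lemma canonChain_isChain {r : ℕ} (hr : 1 ≤ r) : IsPartitionChain r (canonChain r) := by
  refine ⟨by simp [canonChain], ?_, ?_, ?_⟩
  · intro lam hlam
    rw [canonChain, List.mem_map] at hlam
    obtain ⟨s, hs, rfl⟩ := hlam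
    rw [List.mem_range] at hs
    constructor
    · simp [List.sum_replicate]
      omega
    · intro k hk
      rcases List.mem_cons.1 hk with rfl | hk
      · omega
      · rw [List.eq_of_mem_replicate hk]; omega
  · intro i h
    simp only [canonChain, List.length_map, List.length_range] at h ⊢
    simp only [List.get_eq_getElem, List.getElem_map]
    simp [h]
  · refine List.isChain_iff_getElem.2 ?_
    intro i hi
    simp only [canonChain, List.length_map, List.length_range] at hi ⊢
    rw [List.getElem_map, List.getElem_map]
    simp only [List.getElem_range]
    refine ⟨[r - (i+1), 1] :: List.replicate i [1], ?_, ?_, ?_⟩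
    · show ([r - (i+1), 1] :: List.replicate i [1]).flatten =
          (r - (i+1)) :: List.replicate (i+1) 1
      rw [List.flatten_cons, List.flatten_replicate_singleton]
      rfl
    · rw [List.map_cons, List.map_replicate]
      have h1 : [r - (i+1), 1].sum = r - i := by simp; omega
      rw [h1]
      rfl
    · intro g hg
      rcases List.mem_cons.1 hg with rfl | hg
      · simp
      · rw [List.eq_of_mem_replicate hg]; simp

lemma patternOfParts_length (lam : List ℕ) (τ : Fin lam.length → Bool) :
    (patternOfParts lam τ).length = 2 * lam.sum := by
  have h1 : patternOfParts lam τ =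
      (List.ofFn fun i => pblock (lam.get i) (τ i)).flatten := rfl
  rw [h1, List.length_flatten, List.map_ofFn]
  have h2 : (List.length ∘ fun i => pblock (lam.get i) (τ i)) = fun i => 2 * lam.get i := by
    funext i
    simp only [Function.comp_apply, pblock]
    split <;> simp <;> omega
  rw [h2]
  have h3 : lam.sum = (List.ofFn lam.get).sum := by rw [List.ofFn_get]
  rw [h3, List.sum_ofFn, List.sum_ofFn, Finset.mul_sum]

lemma exists_ofFn_of_length {P : List Bool} {n : ℕ} (h : P.length = n) :
    ∃ f : Fin n → Bool, List.ofFn f = P := by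
  subst h
  exact ⟨P.get, List.ofFn_get P⟩

end Assembly

/-- **Multi-parameter lower bound.** There is a collection `H` of pairwise disjoint `r`-element
subsets of `ℤ` in which every `P`-clique has size at most `m P` for every collectable pattern
`P`, and whose size equals the maximum over all chains `λ⁽¹⁾ ≻ … ≻ λ⁽ʳ⁾` of ordered partitions
of `r` of `∏_{P ∈ 𝒫(λ⁽¹⁾) ∪ … ∪ 𝒫(λ⁽ʳ⁾)} m P` (stated as: the maximum is attained by some
chain, and no chain gives a larger product). -/
theorem ordered_matching_multiparameter_lower (r : ℕ) (hr : 1 ≤ r)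
    (m : List Bool → ℕ) (hm : ∀ P : List Bool, Collectable r P → 0 < m P) :
    ∃ H : Finset (Finset ℤ),
      (∀ e ∈ H, e.card = r) ∧
      (∀ e ∈ H, ∀ f ∈ H, e ≠ f → Disjoint e f) ∧
      (∀ P : List Bool, Collectable r P → ∀ S ⊆ H, IsPClique P S → S.card ≤ m P) ∧
      (∃ c : List (List ℕ), IsPartitionChain r c ∧ H.card = ∏ P ∈ chainPatterns c, m P) ∧
      (∀ c : List (List ℕ), IsPartitionChain r c → ∏ P ∈ chainPatterns c, m P ≤ H.card) := by
  classical
  set allP : Finset (List Bool) :=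
    (Finset.univ : Finset (Fin (2*r) → Bool)).image List.ofFn with hallP
  have hmem_allP : ∀ {c' : List (List ℕ)}, IsPartitionChain r c' →
      ∀ P ∈ chainPatterns c', P ∈ allP := by
    intro c' hc' P hP
    obtain ⟨lam, hlam, hPf⟩ := mem_chainPatterns.1 hP
    have hop := hc'.2.1 _ hlam
    obtain ⟨τ, hτ0, hτ⟩ := mem_patternFinset.1 hPf
    have hlen : P.length = 2*r := by rw [← hτ, patternOfParts_length, hop.1]
    obtain ⟨f, hf⟩ := exists_ofFn_of_length hlen
    exact Finset.mem_image.2 ⟨f, Finset.mem_univ _, hf⟩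
  have hbound : ∀ c' : List (List ℕ), IsPartitionChain r c' →
      (∏ P ∈ chainPatterns c', m P) ≤ ∏ P ∈ allP, max 1 (m P) := by
    intro c' hc'
    calc ∏ P ∈ chainPatterns c', m P ≤ ∏ P ∈ chainPatterns c', max 1 (m P) :=
        Finset.prod_le_prod' (fun P _ => le_max_right _ _)
      _ ≤ ∏ P ∈ allP, max 1 (m P) :=
        Finset.prod_le_prod_of_subset_of_one_le'
          (fun P hP => hmem_allP hc' P hP) (fun P _ _ => le_max_left _ _)
  set pred : ℕ → Prop := fun n => ∃ c' : List (List ℕ), IsPartitionChain r c' ∧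
    n = ∏ P ∈ chainPatterns c', m P with hpred
  have hex0 : pred (∏ P ∈ chainPatterns (canonChain r), m P) :=
    ⟨canonChain r, canonChain_isChain hr, rfl⟩
  have hprbd : ∀ n, pred n → n ≤ ∏ P ∈ allP, max 1 (m P) := by
    rintro n ⟨c', hc', rfl⟩; exact hbound c' hc'
  have hstar : pred (Nat.findGreatest pred (∏ P ∈ allP, max 1 (m P))) :=
    Nat.findGreatest_spec (hprbd _ hex0) hex0
  have hmaxall : ∀ n, pred n → n ≤ Nat.findGreatest pred (∏ P ∈ allP, max 1 (m P)) :=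
    fun n hn => Nat.le_findGreatest (hprbd n hn) hn
  obtain ⟨c, hc, hcprod⟩ := hstar
  -- the construction for the maximal chain `c`
  set U := chainPatterns c with hUdef
  set T := U.pi (fun P => Finset.range (m P)) with hTdef
  set unpackZ : (∀ a ∈ U, ℕ) → (List Bool → ℤ) :=
    fun p P => if h : P ∈ U then (p P h : ℤ) else 0 with hunpack
  have hvalid : ∀ p ∈ T, ValidT c m (unpackZ p) := by
    intro p hp P
    have hM1 := hMb1 (c := c) (m := m)
    by_cases h : P ∈ U
    · have hpr : p P h ∈ Finset.range (m P) := Finset.mem_pi.1 hp P h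
      rw [Finset.mem_range] at hpr
      have hM2 := hMb2 (c := c) (m := m) h
      have hcast : (p P h : ℤ) < (m P : ℤ) := by exact_mod_cast hpr
      constructor
      · simp only [hunpack, dif_pos h]; positivity
      · simp only [hunpack, dif_pos h]; omega
    · constructor
      · simp only [hunpack, dif_neg h]; omega
      · simp only [hunpack, dif_neg h]; omega
  set E : (∀ a ∈ U, ℕ) → Finset ℤ := fun p => edgeF c r m (unpackZ p) with hE
  have hheadU : ∀ Q ∈ U, Q.head? = some true := by
    intro Q hQ
    obtain ⟨lam, hlam, hPf⟩ := mem_chainPatterns.1 hQ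
    exact head_true_of_patternFinset hr (hc.2.1 _ hlam) hPf
  -- the main pair analysis
  have hmain : ∀ p p', p ∈ T → p' ∈ T → p ≠ p' →
      ∃ Q, ∃ hQ : Q ∈ U, p Q hQ ≠ p' Q hQ ∧ Disjoint (E p) (E p') ∧
        ∀ R : List Bool, R.head? = some true → Realizes R (E p) (E p') → R = Q := by
    intro p p' hp hp' hne
    have hne2 : ¬ ∀ (P) (h : P ∈ U), p P h = p' P h := by
      intro hall; exact hne (by funext P h; exact hall P h)
    push_neg at hne2
    obtain ⟨P1, hP1U, hP1ne⟩ := hne2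
    obtain ⟨n, hn⟩ := List.mem_iff_get.1 ((mem_Lp hr hc).2 hP1U)
    have hPkn : Pk c r (n : ℕ) = P1 := by
      rw [Pk, getD_eq_get_old _ _ n.2]
      simp only [Fin.eta, hn]
    have hneZ : unpackZ p P1 ≠ unpackZ p' P1 := by
      simp only [hunpack, dif_pos hP1U]
      intro hcon
      exact hP1ne (by exact_mod_cast hcon)
    have hexk : ∃ k, k < NN c r ∧ unpackZ p (Pk c r k) ≠ unpackZ p' (Pk c r k) :=
      ⟨n, n.2, by rw [hPkn]; exact hneZ⟩
    set k0 := Nat.find hexk with hk0def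
    obtain ⟨hk0N, hk0ne⟩ := Nat.find_spec hexk
    have hagree : ∀ l, l < k0 → unpackZ p (Pk c r l) = unpackZ p' (Pk c r l) := by
      intro l hl
      by_contra hcon
      have hlN : l < NN c r := by omega
      have hfle : k0 ≤ l := by rw [hk0def]; exact Nat.find_le ⟨hlN, hcon⟩
      omega
    set Q := Pk c r k0 with hQdef
    have hQU : Q ∈ U := Pk_mem_chain hr hc hk0N
    have hQhead : Q.head? = some true := hheadU Q hQU
    have hQne : p Q hQU ≠ p' Q hQU := by
      intro hPP
      apply hk0ne
      simp only [hunpack, dif_pos hQU, hPP]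
    -- common "wrong order has head false" fact
    have hwrong : ∀ pa pb : (∀ a ∈ U, ℕ), Disjoint (E pa) (E pb) →
        patternOfPair (E pa) (E pb) = Q →
        (patternOfPair (E pb) (E pa)).head? = some false := by
      intro pa pb hdis hgood
      have hQh := hQhead
      rw [← hgood, patternOfPair, List.head?_map] at hQh
      obtain ⟨z, hz1, hz2⟩ := Option.map_eq_some_iff.1 hQh
      rw [decide_eq_true_eq] at hz2
      have hz3 : z ∉ E pb := Finset.disjoint_left.1 hdis hz2
      rw [patternOfPair, List.head?_map, Finset.union_comm (E pb) (E pa), hz1]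
      simp [hz3]
    rcases lt_or_gt_of_ne hk0ne with hlt | hgt
    · have hpos : 1 ≤ unpackZ p' Q - unpackZ p Q := by omega
      obtain ⟨hpat, hdisj⟩ := pair_pattern hr hc (hvalid p' hp') (hvalid p hp) hk0N
        (fun l hl => (hagree l hl).symm) hpos
      refine ⟨Q, hQU, hQne, hdisj, ?_⟩
      intro R hRhead hReal
      rcases hReal with h | h
      · rw [← h]; exact hpat
      · exfalso
        have := hwrong p p' hdisj hpat
        rw [h] at this
        rw [this] at hRhead
        exact (by simp at hRhead : False)
    · have hpos : 1 ≤ unpackZ p Q - unpackZ p' Q := by omega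
      obtain ⟨hpat, hdisj⟩ := pair_pattern hr hc (hvalid p hp) (hvalid p' hp') hk0N
        hagree hpos
      refine ⟨Q, hQU, hQne, hdisj.symm, ?_⟩
      intro R hRhead hReal
      rcases hReal with h | h
      · exfalso
        have := hwrong p' p hdisj hpat
        rw [h] at this
        rw [this] at hRhead
        exact (by simp at hRhead : False)
      · rw [← h]; exact hpat
  -- basic edge facts
  have hcardE : ∀ p ∈ T, (E p).card = r := by
    intro p hp
    have hinjx : Set.InjOn (xF c r m (unpackZ p)) ↑(Finset.range r) := by
      intro a ha b hb hab
      simp only [Finset.coe_range, Set.mem_Iio] at ha hb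
      by_contra hne
      rcases Nat.lt_or_ge a b with h | h
      · exact absurd hab (ne_of_lt (x_lt hr hc (hvalid p hp) h hb))
      · have hba : b < a := by omega
        exact absurd hab.symm (ne_of_lt (x_lt hr hc (hvalid p hp) hba ha))
    rw [hE]
    show (edgeF c r m (unpackZ p)).card = r
    rw [edgeF, Finset.card_image_of_injOn hinjx, Finset.card_range]
  have hEne : ∀ p ∈ T, (E p).Nonempty := by
    intro p hp
    exact ⟨xF c r m (unpackZ p) 0,
      Finset.mem_image.2 ⟨0, Finset.mem_range.2 (by omega), rfl⟩⟩
  have hEinj : Set.InjOn E ↑T := by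
    intro p hp p' hp' hEE
    by_contra hne
    obtain ⟨Q, hQU, hQne, hdisj, -⟩ := hmain p p' (Finset.mem_coe.1 hp) (Finset.mem_coe.1 hp') hne
    obtain ⟨z, hz⟩ := hEne p (Finset.mem_coe.1 hp)
    exact (Finset.disjoint_left.1 hdisj hz) (hEE ▸ hz)
  set H : Finset (Finset ℤ) := T.image E with hH
  have hHcard : H.card = ∏ P ∈ U, m P := by
    rw [hH, Finset.card_image_of_injOn hEinj, hTdef, Finset.card_pi]
    exact Finset.prod_congr rfl (fun P _ => Finset.card_range _)
  refine ⟨H, ?_, ?_, ?_, ⟨c, hc, hHcard⟩, ?_⟩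
  · -- cardinality r
    intro e he
    obtain ⟨p, hp, rfl⟩ := Finset.mem_image.1 he
    exact hcardE p hp
  · -- pairwise disjoint
    intro e he f hf hef
    obtain ⟨p, hp, rfl⟩ := Finset.mem_image.1 he
    obtain ⟨p', hp', rfl⟩ := Finset.mem_image.1 hf
    have hne : p ≠ p' := fun h => hef (by rw [h])
    obtain ⟨Q, hQU, hQne, hdisj, -⟩ := hmain p p' hp hp' hne
    exact hdisj
  · -- clique bound
    intro P hcol S hS hclique
    have hPhead : P.head? = some true := by
      obtain ⟨lam, hop, hPf⟩ := hcol
      exact head_true_of_patternFinset hr hop hPf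
    have hrep : ∀ e ∈ S, ∃ p, p ∈ T ∧ E p = e := by
      intro e he
      obtain ⟨p, hp, hpe⟩ := Finset.mem_image.1 (hS he)
      exact ⟨p, hp, hpe⟩
    choose pf hpfT hpfE using hrep
    by_cases hPU : P ∈ U
    · have hmaps : ∀ e ∈ S, (if he : e ∈ S then pf e he P hPU else 0) ∈ Finset.range (m P) := by
        intro e he
        rw [dif_pos he]
        exact Finset.mem_pi.1 (hpfT e he) P hPU
      have hinj2 : Set.InjOn (fun e => if he : e ∈ S then pf e he P hPU else 0) ↑S := by
        intro e he e' he' hfe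
        have heS : e ∈ S := Finset.mem_coe.1 he
        have heS' : e' ∈ S := Finset.mem_coe.1 he'
        simp only [dif_pos heS, dif_pos heS'] at hfe
        by_contra hne
        have hpne : pf e heS ≠ pf e' heS' := by
          intro h
          exact hne (by rw [← hpfE e heS, ← hpfE e' heS', h])
        obtain ⟨Q, hQU2, hQne, hdisj, huniq⟩ :=
          hmain (pf e heS) (pf e' heS') (hpfT e heS) (hpfT e' heS') hpne
        have hreal : Realizes P (E (pf e heS)) (E (pf e' heS')) := by
          rw [hpfE e heS, hpfE e' heS']
          exact hclique e heS e' heS' hne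
        have hPQ : P = Q := huniq P hPhead hreal
        subst hPQ
        exact hQne hfe
      have hle := Finset.card_le_card_of_injOn _ hmaps hinj2
      rwa [Finset.card_range] at hle
    · have hS1 : S.card ≤ 1 := by
        rw [Finset.card_le_one]
        intro e he e' he'
        by_contra hne
        have hpne : pf e he ≠ pf e' he' := by
          intro h
          exact hne (by rw [← hpfE e he, ← hpfE e' he', h])
        obtain ⟨Q, hQU2, hQne, hdisj, huniq⟩ :=
          hmain (pf e he) (pf e' he') (hpfT e he) (hpfT e' he') hpne
        have hreal : Realizes P (E (pf e he)) (E (pf e' he')) := by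
          rw [hpfE e he, hpfE e' he']
          exact hclique e he e' he' hne
        exact hPU (huniq P hPhead hreal ▸ hQU2)
      exact hS1.trans (hm P hcol)
  · -- maximality
    intro c'' hc''
    rw [hHcard, hUdef, ← hcprod]
    exact hmaxall _ ⟨c'', hc'', rfl⟩
end

section
/- For every ordered partition λ = (λ_1,…,λ_s) of r, the number of collectable r-patterns whose block partition has blocks of sizes 2λ_1,…,2λ_s (in order) is exactly 2^{s−1}. -/
lemma pblock_length (k : ℕ) (b : Bool) : (pblock k b).length = 2 * k := by
  cases b <;> simp [pblock] <;> ring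

lemma pblock_head (k : ℕ) (hk : 0 < k) (b : Bool) : (pblock k b).head? = some b := by
  obtain ⟨m, rfl⟩ := Nat.exists_eq_succ_of_ne_zero hk.ne'
  cases b <;> simp [pblock, List.replicate_succ]

lemma patternOfParts_cons (k : ℕ) (lam : List ℕ) (τ : Fin (lam.length + 1) → Bool) :
    patternOfParts (k :: lam) τ = pblock k (τ 0) ++ patternOfParts lam (fun i => τ i.succ) := by
  simp [patternOfParts, List.ofFn_succ]

lemma patternOfParts_inj (lam : List ℕ) (hpos : ∀ k ∈ lam, 0 < k) :
    Function.Injective (patternOfParts lam) := by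
  induction lam with
  | nil => intro τ₁ τ₂ _; funext i; exact i.elim0
  | cons k lam ih =>
    intro τ₁' τ₂' h
    have hc : ((k :: lam).length) = lam.length + 1 := rfl
    let τ₁ : Fin (lam.length + 1) → Bool := fun i => τ₁' (Fin.cast hc.symm i)
    let τ₂ : Fin (lam.length + 1) → Bool := fun i => τ₂' (Fin.cast hc.symm i)
    have hpp : ∀ τ' : Fin ((k::lam).length) → Bool, patternOfParts (k::lam) τ' = patternOfParts (k::lam) (fun i : Fin (lam.length+1) => τ' (Fin.cast hc.symm i)) := fun _ => rfl
    rw [hpp τ₁', hpp τ₂'] at h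
    rw [patternOfParts_cons, patternOfParts_cons] at h
    have hlen : (pblock k (τ₁ 0)).length = (pblock k (τ₂ 0)).length := by
      rw [pblock_length, pblock_length]
    obtain ⟨h1, h2⟩ := List.append_inj h hlen
    have hk : 0 < k := hpos k (by simp)
    have h0 : τ₁ 0 = τ₂ 0 := by
      have := congrArg List.head? h1
      rw [pblock_head k hk, pblock_head k hk] at this
      exact Option.some_injective _ this
    have ht : (fun i : Fin lam.length => τ₁ i.succ) = (fun i : Fin lam.length => τ₂ i.succ) :=
      ih (fun m hm => hpos m (by simp [hm])) h2
    have : τ₁ = τ₂ := by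
      funext i
      refine Fin.cases h0 (fun j => ?_) i
      exact congrFun ht j
    funext i
    exact congrFun this (Fin.cast hc i)

lemma filter_card_cons (n : ℕ) :
    (Finset.univ.filter (fun τ : Fin (n + 1) → Bool => τ 0 = true)).card = 2 ^ n := by
  have himg : Finset.univ.filter (fun τ : Fin (n + 1) → Bool => τ 0 = true)
      = (Finset.univ : Finset (Fin n → Bool)).image (Fin.cons true) := by
    ext σ
    simp only [Finset.mem_filter, Finset.mem_univ, true_and, Finset.mem_image]
    constructor
    · intro h
      exact ⟨Fin.tail σ, by rw [← h]; exact Fin.cons_self_tail σ⟩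
    · rintro ⟨τ, rfl⟩; simp
  rw [himg, Finset.card_image_of_injective _ (Fin.cons_right_injective _)]
  simp

/-- For every ordered partition `lam` of `r` with `s` parts, there are exactly `2^(s-1)`
collectable `r`-patterns whose block partition has block sizes `2·lam 0, …, 2·lam (s-1)`. -/
theorem patternFinset_card (r s : ℕ) (hr : 0 < r) (lam : List ℕ)
    (hlam : IsOrderedPartition r lam) (hlen : lam.length = s) :
    (patternFinset lam).card = 2 ^ (s - 1) := by
  have hne : lam ≠ [] := by
    intro h; subst h
    simp [IsOrderedPartition] at hlam
    omega
  obtain ⟨a, rest, rfl⟩ := List.exists_cons_of_ne_nil hne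
  rw [patternFinset, Finset.card_image_of_injOn
    ((patternOfParts_inj _ hlam.2).injOn)]
  have hfc : (Finset.univ.filter (fun τ : Fin ((a :: rest).length) → Bool =>
      ∀ h : 0 < (a :: rest).length, τ ⟨0, h⟩ = true))
      = (Finset.univ.filter (fun τ : Fin (rest.length + 1) → Bool => τ 0 = true)) := by
    apply Finset.filter_congr
    intro τ _
    exact ⟨fun h => h (Nat.succ_pos _), fun h _ => h⟩
  rw [hfc, filter_card_cons]
  congr 1
  simp at hlen
  omega
end

section
/- Let λ = (λ_1,…,λ_s) be an ordered partition of r with s < r parts, and for each ordered partition λ' of r into s+1 parts with λ ≻ λ' let M_{λ'} be a positive integer, with M = Σ_{λ'} M_{λ'}. Let H be a λ-partite collection of pairwise disjoint r-element subsets of ℤ. Then either (a) there is an interval-wise λ-partite sub-collection H* ⊆ H with |H*| ≥ |H|/(2M), or (b) for some ordered partition λ' of r into s+1 parts with λ ≻ λ', there is a λ'-partite sub-collection H' ⊆ H with |H'| > M_{λ'}. -/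
open scoped Classical


/-- `H` is `lam`-partite: there are non-integer reals `x 0 < x 1 < … < x s` such that every
`e ∈ H` has exactly `lam.get i` elements in the interval `(x i, x (i+1))`. -/
def IsLamPartite (lam : List ℕ) (H : Finset (Finset ℤ)) : Prop :=
  ∃ x : Fin (lam.length + 1) → ℝ, StrictMono x ∧ (∀ i, ∀ z : ℤ, (z : ℝ) ≠ x i) ∧
    ∀ e ∈ H, ∀ i : Fin lam.length,
      {z : ℤ | z ∈ e ∧ x i.castSucc < (z : ℝ) ∧ (z : ℝ) < x i.succ}.ncard = lam.get i

/-- `H` is interval-wise `lam`-partite: `lam`-partite, and moreover for each `i` the convex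
hulls of the parts `e ∩ (x i, x (i+1))` are pairwise disjoint over `e ∈ H` (equivalently, for
distinct `e, f ∈ H` all elements of one part precede all elements of the other part). -/
def IsIntervalWisePartite (lam : List ℕ) (H : Finset (Finset ℤ)) : Prop :=
  ∃ x : Fin (lam.length + 1) → ℝ, StrictMono x ∧ (∀ i, ∀ z : ℤ, (z : ℝ) ≠ x i) ∧
    (∀ e ∈ H, ∀ i : Fin lam.length,
      {z : ℤ | z ∈ e ∧ x i.castSucc < (z : ℝ) ∧ (z : ℝ) < x i.succ}.ncard = lam.get i) ∧
    ∀ i : Fin lam.length, ∀ e ∈ H, ∀ f ∈ H, e ≠ f →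
      (∀ a ∈ e, ∀ b ∈ f,
        (x i.castSucc < (a : ℝ) ∧ (a : ℝ) < x i.succ) →
        (x i.castSucc < (b : ℝ) ∧ (b : ℝ) < x i.succ) → a < b) ∨
      (∀ a ∈ e, ∀ b ∈ f,
        (x i.castSucc < (a : ℝ) ∧ (a : ℝ) < x i.succ) →
        (x i.castSucc < (b : ℝ) ∧ (b : ℝ) < x i.succ) → b < a)

/-- the part of `e` in the open interval `(u,v)`. -/
noncomputable def ipart (u v : ℝ) (e : Finset ℤ) : Finset ℤ :=
  e.filter (fun z => u < (z:ℝ) ∧ (z:ℝ) < v)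

/-- `e` is pierced at `L + 1/2` inside `(u,v)`. -/
def Pierce (u v : ℝ) (L : ℤ) (e : Finset ℤ) : Prop :=
  (∃ a ∈ ipart u v e, a ≤ L) ∧ (∃ b ∈ ipart u v e, L < b)

/-- the parts of `e` and `f` in `(u,v)` interleave. -/
def Confl (u v : ℝ) (e f : Finset ℤ) : Prop :=
  (∃ a ∈ ipart u v e, ∃ b ∈ ipart u v f, b < a) ∧
  (∃ a ∈ ipart u v e, ∃ b ∈ ipart u v f, a < b)

lemma confl_symm {u v : ℝ} {e f : Finset ℤ} (h : Confl u v e f) : Confl u v f e := by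
  obtain ⟨⟨a, ha, b, hb, hba⟩, ⟨a', ha', b', hb', hab⟩⟩ := h
  exact ⟨⟨b', hb', a', ha', hab⟩, ⟨b, hb, a, ha, hba⟩⟩

/-- canonical least element of a finset of integers -/
def gmin (t : Finset ℤ) : ℤ := t.min.getD 0

lemma gmin_mem {t : Finset ℤ} (h : t.Nonempty) : gmin t ∈ t := by
  obtain ⟨m, hm⟩ := Finset.min_of_nonempty h
  have : gmin t = m := by rw [gmin, hm]; rfl
  rw [this]; exact Finset.mem_of_min hm

lemma gmin_le {t : Finset ℤ} {z : ℤ} (hz : z ∈ t) : gmin t ≤ z := by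
  obtain ⟨m, hm⟩ := Finset.min_of_nonempty ⟨z, hz⟩
  have : gmin t = m := by rw [gmin, hm]; rfl
  rw [this]; exact Finset.min_le_of_eq hz hm

lemma confl_two_le {u v : ℝ} {e f : Finset ℤ}
    (hcc : (ipart u v e).card = (ipart u v f).card) (h : Confl u v e f) :
    2 ≤ (ipart u v e).card := by
  obtain ⟨⟨a, ha, b, hb, hba⟩, ⟨a', ha', b', hb', hab⟩⟩ := h
  by_contra hlt
  push_neg at hlt
  interval_cases hc : (ipart u v e).card
  · exact absurd ha (by simp [Finset.card_eq_zero.mp hc])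
  · obtain ⟨c, hc'⟩ := Finset.card_eq_one.mp hc
    obtain ⟨d, hd'⟩ := Finset.card_eq_one.mp (by omega : (ipart u v f).card = 1)
    rw [hc'] at ha ha'; rw [hd'] at hb hb'
    simp at ha ha' hb hb'
    omega

lemma confl_pierce {u v : ℝ} {e f : Finset ℤ}
    (hcc : (ipart u v e).card = (ipart u v f).card) (hc : Confl u v e f)
    (hle : gmin (ipart u v f) ≤ gmin (ipart u v e)) :
    Pierce u v (gmin (ipart u v e)) e ∧ Pierce u v (gmin (ipart u v e)) f := by
  obtain ⟨⟨a, ha, b, hb, hba⟩, ⟨a', ha', b', hb', hab⟩⟩ := hc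
  have hne : (ipart u v e).Nonempty := ⟨a, ha⟩
  have hnf : (ipart u v f).Nonempty := ⟨b, hb⟩
  have h2 : 2 ≤ (ipart u v e).card := confl_two_le hcc ⟨⟨a, ha, b, hb, hba⟩, ⟨a', ha', b', hb', hab⟩⟩
  obtain ⟨c, hcmem, hcne⟩ := Finset.exists_mem_ne (s := ipart u v e) (by omega) (gmin (ipart u v e))
  refine ⟨⟨⟨gmin (ipart u v e), gmin_mem hne, le_refl _⟩, ⟨c, hcmem, ?_⟩⟩,
    ⟨⟨gmin (ipart u v f), gmin_mem hnf, hle⟩, ⟨b', hb', lt_of_le_of_lt (gmin_le ha') hab⟩⟩⟩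
  exact lt_of_le_of_ne (gmin_le hcmem) (Ne.symm hcne)

lemma degree_sum_bound (u v : ℝ) (H0 : Finset (Finset ℤ)) (c : ℕ)
    (hpc : ∀ e ∈ H0, (ipart u v e).card = c)
    (Mi : ℕ) (hdepth : ∀ L : ℤ, (H0.filter (fun e => Pierce u v L e)).card ≤ Mi) :
    ∀ n : ℕ, ∀ S ⊆ H0, S.card = n →
      (∑ e ∈ S, (S.filter (fun f => f ≠ e ∧ Confl u v e f)).card) ≤ 2 * (Mi - 1) * n := by
  intro n
  induction n using Nat.strong_induction_on with
  | _ n IH =>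
    intro S hSH hScard
    rcases Finset.eq_empty_or_nonempty S with rfl | hSne
    · simp
    obtain ⟨e0, he0S, hmax⟩ := S.exists_max_image (fun e => gmin (ipart u v e)) hSne
    set S' := S.erase e0 with hS'def
    have hins : S = insert e0 S' := (Finset.insert_erase he0S).symm
    have he0nS' : e0 ∉ S' := Finset.notMem_erase _ _
    have hS'card : S'.card = n - 1 := by rw [hS'def, Finset.card_erase_of_mem he0S, hScard]
    have hn1 : 1 ≤ n := by rw [← hScard]; exact Finset.card_pos.mpr hSne
    obtain ⟨m, rfl⟩ : ∃ m, n = m + 1 := ⟨n - 1, by omega⟩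
    have hdeg : (S.filter (fun f => f ≠ e0 ∧ Confl u v e0 f)).card ≤ Mi - 1 := by
      set D := S.filter (fun f => f ≠ e0 ∧ Confl u v e0 f) with hDdef
      rcases D.eq_empty_or_nonempty with hDe | ⟨f0, hf0⟩
      · simp [hDe]
      set L0 := gmin (ipart u v e0) with hL0
      have hpe0 : ∀ g ∈ D, Pierce u v L0 e0 ∧ Pierce u v L0 g := by
        intro g hg
        obtain ⟨hgS, hgne, hgc⟩ := Finset.mem_filter.mp hg
        exact confl_pierce (by rw [hpc e0 (hSH he0S), hpc g (hSH hgS)]) hgc (hmax g hgS)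
      have hsub : insert e0 D ⊆ H0.filter (fun e => Pierce u v L0 e) := by
        intro g hg
        rcases Finset.mem_insert.mp hg with rfl | hgD
        · exact Finset.mem_filter.mpr ⟨hSH he0S, (hpe0 f0 hf0).1⟩
        · have hgS := (Finset.mem_filter.mp hgD).1
          exact Finset.mem_filter.mpr ⟨hSH hgS, (hpe0 g hgD).2⟩
      have he0nD : e0 ∉ D := by
        intro hc
        exact ((Finset.mem_filter.mp hc).2.1) rfl
      have := Finset.card_le_card hsub
      rw [Finset.card_insert_of_notMem he0nD] at this
      have := hdepth L0
      omega
    have hstep : ∀ e ∈ S', (S.filter (fun f => f ≠ e ∧ Confl u v e f)).card ≤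
        (S'.filter (fun f => f ≠ e ∧ Confl u v e f)).card +
          (if e0 ≠ e ∧ Confl u v e e0 then 1 else 0) := by
      intro e heS'
      rw [hins, Finset.filter_insert]
      split_ifs with h
      · rw [Finset.card_insert_of_notMem (fun hc => he0nS' (Finset.mem_filter.mp hc).1)]
      · simp
    have hcnt : (∑ e ∈ S', (if e0 ≠ e ∧ Confl u v e e0 then 1 else 0)) ≤
        (S.filter (fun f => f ≠ e0 ∧ Confl u v e0 f)).card := by
      rw [← Finset.card_filter]
      refine Finset.card_le_card ?_
      intro e he
      obtain ⟨heS', hne, hcf⟩ := Finset.mem_filter.mp he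
      exact Finset.mem_filter.mpr ⟨Finset.mem_of_mem_erase heS', Ne.symm hne, confl_symm hcf⟩
    have hIH := IH m (by omega) S' (fun e he => hSH (Finset.mem_of_mem_erase he)) (by omega)
    calc (∑ e ∈ S, (S.filter (fun f => f ≠ e ∧ Confl u v e f)).card)
        = (S.filter (fun f => f ≠ e0 ∧ Confl u v e0 f)).card +
          ∑ e ∈ S', (S.filter (fun f => f ≠ e ∧ Confl u v e f)).card := by
          rw [hins, Finset.sum_insert he0nS']
      _ ≤ (S.filter (fun f => f ≠ e0 ∧ Confl u v e0 f)).card +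
          (∑ e ∈ S', ((S'.filter (fun f => f ≠ e ∧ Confl u v e f)).card +
            (if e0 ≠ e ∧ Confl u v e e0 then 1 else 0))) := by
          exact Nat.add_le_add_left (Finset.sum_le_sum hstep) _
      _ ≤ 2 * (Mi - 1) * (m + 1) := by
          rw [Finset.sum_add_distrib]
          have h1 := hdeg
          have h2 := hcnt
          have h3 := hIH
          have h4 : 2 * (Mi - 1) * (m + 1) = 2 * (Mi - 1) * m + 2 * (Mi - 1) := by ring
          omega

lemma greedy_indep (H : Finset (Finset ℤ)) (Rel : Finset ℤ → Finset ℤ → Prop)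
    [DecidableRel Rel] (hsymm : ∀ e f, Rel e f → Rel f e) (D : ℕ)
    (hdeg : ∀ S ⊆ H, S.Nonempty → ∃ e ∈ S, (S.filter (fun f => f = e ∨ Rel e f)).card ≤ D + 1) :
    ∀ n : ℕ, ∀ Hc ⊆ H, Hc.card = n →
      ∃ T ⊆ Hc, (∀ e ∈ T, ∀ f ∈ T, e ≠ f → ¬ Rel e f) ∧ Hc.card ≤ (D + 1) * T.card := by
  intro n
  induction n using Nat.strong_induction_on with
  | _ n IH =>
    intro Hc hHcH hHccard
    rcases Finset.eq_empty_or_nonempty Hc with rfl | hne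
    · exact ⟨∅, Finset.Subset.refl _, by simp, by simp⟩
    obtain ⟨e, heHc, hedeg⟩ := hdeg Hc hHcH hne
    set N := Hc.filter (fun f => f = e ∨ Rel e f) with hNdef
    have heN : e ∈ N := Finset.mem_filter.mpr ⟨heHc, Or.inl rfl⟩
    have hNsub : N ⊆ Hc := Finset.filter_subset _ _
    have hN1 : 1 ≤ N.card := Finset.card_pos.mpr ⟨e, heN⟩
    set Hc' := Hc \ N with hHc'def
    have hHc'sub : Hc' ⊆ Hc := Finset.sdiff_subset
    have hcard' : Hc'.card = Hc.card - N.card := Finset.card_sdiff_of_subset hNsub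
    obtain ⟨T', hT'sub, hT'indep, hT'card⟩ :=
      IH Hc'.card (by rw [hcard', hHccard]; have := Finset.card_pos.mpr hne; omega) Hc' (hHc'sub.trans hHcH) rfl
    have heT' : e ∉ T' := by
      intro hc
      have := hT'sub hc
      rw [hHc'def, Finset.mem_sdiff] at this
      exact this.2 heN
    refine ⟨insert e T', ?_, ?_, ?_⟩
    · intro g hg
      rcases Finset.mem_insert.mp hg with rfl | hgT'
      · exact heHc
      · exact hHc'sub (hT'sub hgT')
    · intro a ha b hb hab
      have hnotN : ∀ g ∈ T', ¬ (g = e ∨ Rel e g) := by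
        intro g hg hc
        have := hT'sub hg
        rw [hHc'def, Finset.mem_sdiff] at this
        exact this.2 (Finset.mem_filter.mpr ⟨this.1, hc⟩)
      rcases Finset.mem_insert.mp ha with rfl | haT' <;>
        rcases Finset.mem_insert.mp hb with rfl | hbT'
      · exact absurd rfl hab
      · exact fun hc => hnotN b hbT' (Or.inr hc)
      · exact fun hc => hnotN a haT' (Or.inr (hsymm _ _ hc))
      · exact hT'indep a haT' b hbT' hab
    · rw [Finset.card_insert_of_notMem heT']
      have : Hc.card = Hc'.card + N.card := by
        rw [hcard']
        have := Finset.card_le_card hNsub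
        omega
      have hmul : (D + 1) * (T'.card + 1) = (D + 1) * T'.card + (D + 1) := by ring
      omega

def splitA (lam : List ℕ) (i a b : ℕ) : List ℕ := lam.take i ++ a :: b :: lam.drop (i+1)

lemma splitA_length {lam : List ℕ} {i : ℕ} (hi : i < lam.length) (a b : ℕ) :
    (splitA lam i a b).length = lam.length + 1 := by
  simp [splitA]; omega

lemma list_flatten_map_singleton (L : List ℕ) : (L.map (fun k => [k])).flatten = L := by
  induction L with
  | nil => rfl
  | cons h t ih =>
    show [h] ++ (t.map (fun k => [k])).flatten = h :: t
    rw [ih]; rfl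

lemma splitA_refines {lam : List ℕ} {i : ℕ} (hi : i < lam.length) {a b : ℕ}
    (hab : a + b = lam[i]) : Refines lam (splitA lam i a b) := by
  refine ⟨(lam.take i).map (fun k => [k]) ++ [a, b] :: (lam.drop (i+1)).map (fun k => [k]),
    ?_, ?_, ?_⟩
  · show ((lam.take i).map (fun k => [k]) ++ [a, b] :: (lam.drop (i+1)).map (fun k => [k])).flatten
        = splitA lam i a b
    rw [List.flatten_append, List.flatten_cons, list_flatten_map_singleton,
      list_flatten_map_singleton]
    rfl
  · have hdec : lam = lam.take i ++ lam[i] :: lam.drop (i+1) := by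
      conv_lhs => rw [← List.take_append_drop i lam]
      rw [List.drop_eq_getElem_cons hi]
    have h1 : ∀ L : List ℕ, (L.map (fun k => [k])).map List.sum = L := by
      intro L
      induction L with
      | nil => rfl
      | cons h t ih => simp only [List.map_cons, ih, List.sum_cons, List.sum_nil, Nat.add_zero]
    rw [List.map_append, List.map_cons, h1, h1]
    have h2 : [a, b].sum = lam[i] := by simp; omega
    rw [h2]
    exact hdec.symm
  · intro g hg
    rcases List.mem_append.mp hg with h | h
    · obtain ⟨k, _, rfl⟩ := List.mem_map.mp h
      simp
    · rcases List.mem_cons.mp h with rfl | h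
      · simp
      · obtain ⟨k, _, rfl⟩ := List.mem_map.mp h
        simp

lemma splitA_sum {lam : List ℕ} {i : ℕ} (hi : i < lam.length) {a b : ℕ}
    (hab : a + b = lam[i]) : (splitA lam i a b).sum = lam.sum := by
  have hdec : lam = lam.take i ++ lam[i] :: lam.drop (i+1) := by
    conv_lhs => rw [← List.take_append_drop i lam]
    rw [List.drop_eq_getElem_cons hi]
  conv_rhs => rw [hdec]
  rw [splitA]
  simp only [List.sum_append, List.sum_cons]
  omega

lemma splitA_mem {lam : List ℕ} {i : ℕ} {a b k : ℕ} (hk : k ∈ splitA lam i a b) :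
    k = a ∨ k = b ∨ k ∈ lam := by
  rcases List.mem_append.mp hk with h | h
  · exact Or.inr (Or.inr (List.mem_of_mem_take h))
  · rcases List.mem_cons.mp h with rfl | h
    · exact Or.inl rfl
    · rcases List.mem_cons.mp h with rfl | h
      · exact Or.inr (Or.inl rfl)
      · exact Or.inr (Or.inr (List.mem_of_mem_drop h))

lemma splitA_get_lt {lam : List ℕ} {i j : ℕ} (hi : i < lam.length) (hj : j < i) (a b : ℕ) :
    (splitA lam i a b)[j]'(by rw [splitA_length hi]; omega) = lam[j]'(by omega) := by
  simp only [splitA]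
  rw [List.getElem_append_left (by simp only [List.length_take]; omega)]
  exact List.getElem_take

lemma splitA_get_i {lam : List ℕ} {i : ℕ} (hi : i < lam.length) (a b : ℕ) :
    (splitA lam i a b)[i]'(by rw [splitA_length hi]; omega) = a := by
  simp only [splitA]
  rw [List.getElem_append_right (by simp only [List.length_take]; omega)]
  simp [List.length_take, Nat.min_eq_left hi.le]

lemma splitA_get_i1 {lam : List ℕ} {i : ℕ} (hi : i < lam.length) (a b : ℕ) :
    (splitA lam i a b)[i+1]'(by rw [splitA_length hi]; omega) = b := by
  simp only [splitA]
  rw [List.getElem_append_right (by simp only [List.length_take]; omega)]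
  have h3 : i + 1 - (lam.take i).length = 1 := by
    simp only [List.length_take]; rw [Nat.min_eq_left hi.le]; omega
  simp only [h3]
  rfl

lemma splitA_get_gt {lam : List ℕ} {i j : ℕ} (hi : i < lam.length) (hj : i + 1 < j)
    (hj2 : j < lam.length + 1) (a b : ℕ) :
    (splitA lam i a b)[j]'(by rw [splitA_length hi]; omega) = lam[j-1]'(by omega) := by
  simp only [splitA]
  rw [List.getElem_append_right (by simp only [List.length_take]; omega)]
  have h1 : j - (lam.take i).length = (j - i - 2) + 2 := by
    simp only [List.length_take]; rw [Nat.min_eq_left hi.le]; omega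
  simp only [h1, List.getElem_cons_succ]
  rw [List.getElem_drop]
  congr 1
  omega

lemma splitA_inj {lam : List ℕ} {i i' a a' : ℕ} (hi : i < lam.length) (hi' : i' < lam.length)
    (ha2 : a < lam[i]) (ha2' : a' < lam[i'])
    (heq : splitA lam i a (lam[i] - a) = splitA lam i' a' (lam[i'] - a')) :
    i = i' ∧ a = a' := by
  have hkey : ∀ j j' c c' d d' (hj : j < lam.length), j' < lam.length → j < j' →
      c < lam[j]'hj → splitA lam j c d = splitA lam j' c' d' → False := by
    intro j j' c c' d d' hj hj' hjj' hc h
    have h1 : (splitA lam j c d)[j]'(by rw [splitA_length hj]; omega) = c := splitA_get_i hj _ _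
    have h2 : (splitA lam j' c' d')[j]'(by rw [splitA_length hj']; omega) = lam[j]'(by omega) :=
      splitA_get_lt hj' hjj' _ _
    have h3 := List.getElem_of_eq h (i := j) (by rw [splitA_length hj]; omega)
    rw [h1, h2] at h3
    omega
  rcases lt_trichotomy i i' with h | h | h
  · exact ((hkey i i' a a' _ _ hi hi' h ha2 heq)).elim
  · subst h
    refine ⟨rfl, ?_⟩
    have h1 : (splitA lam i a (lam[i] - a))[i]'(by rw [splitA_length hi]; omega) = a :=
      splitA_get_i hi _ _
    have h2 : (splitA lam i a' (lam[i] - a'))[i]'(by rw [splitA_length hi]; omega) = a' :=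
      splitA_get_i hi _ _
    have h3 := List.getElem_of_eq heq (i := i) (by rw [splitA_length hi]; omega)
    rw [h1, h2] at h3
    exact h3
  · exact ((hkey i' i a' a _ _ hi' hi h ha2' heq.symm)).elim

lemma setcard (e : Finset ℤ) (p : ℤ → Prop) [DecidablePred p] :
    {z : ℤ | z ∈ e ∧ p z}.ncard = (e.filter p).card := by
  rw [← Set.ncard_coe_finset]
  congr 1
  ext z
  simp [Finset.mem_filter]

lemma int_lt_half {z L : ℤ} : ((z:ℝ) < (L:ℝ) + 1/2) ↔ z ≤ L := by
  constructor
  · intro h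
    have h2 : (z:ℝ) < ((L + 1 : ℤ) : ℝ) := by push_cast; linarith
    have h3 : z < L + 1 := by exact_mod_cast h2
    omega
  · intro h
    have : (z:ℝ) ≤ (L:ℝ) := by exact_mod_cast h
    linarith

lemma half_lt_int {z L : ℤ} : ((L:ℝ) + 1/2 < (z:ℝ)) ↔ L < z := by
  constructor
  · intro h
    have h2 : ((L:ℤ):ℝ) < (z:ℝ) := by linarith
    exact_mod_cast h2
  · intro h
    have h2 : ((L + 1 : ℤ) : ℝ) ≤ (z:ℝ) := by exact_mod_cast h
    push_cast at h2
    linarith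

lemma half_ne_int (L : ℤ) (z : ℤ) : (z:ℝ) ≠ (L:ℝ) + 1/2 := by
  intro h
  rcases le_or_gt z L with hle | hlt
  · have : (z:ℝ) ≤ (L:ℝ) := by exact_mod_cast hle
    linarith
  · have : ((L + 1 : ℤ) : ℝ) ≤ (z:ℝ) := by exact_mod_cast hlt
    push_cast at this
    linarith

noncomputable def insx (n : ℕ) (x : Fin (n+1) → ℝ) (i : ℕ) (y : ℝ) (j : ℕ) : ℝ :=
  if h1 : j ≤ i ∧ j ≤ n then x ⟨j, by omega⟩
  else if j = i + 1 then y
  else if h2 : j - 1 ≤ n then x ⟨j - 1, by omega⟩ else 0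

lemma insx_le {n : ℕ} {x : Fin (n+1) → ℝ} {i : ℕ} {y : ℝ} {j : ℕ} (hj : j ≤ i) (hin : i < n) :
    insx n x i y j = x ⟨j, by omega⟩ := by
  rw [insx, dif_pos ⟨hj, by omega⟩]

lemma insx_mid {n : ℕ} {x : Fin (n+1) → ℝ} {i : ℕ} {y : ℝ} :
    insx n x i y (i+1) = y := by
  rw [insx, dif_neg (by omega), if_pos rfl]

lemma insx_gt {n : ℕ} {x : Fin (n+1) → ℝ} {i : ℕ} {y : ℝ} {j : ℕ} (hj : i + 1 < j)
    (hj2 : j - 1 ≤ n) : insx n x i y j = x ⟨j - 1, by omega⟩ := by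
  rw [insx, dif_neg (by omega), if_neg (by omega), dif_pos hj2]

lemma insx_cases {n : ℕ} {x : Fin (n+1) → ℝ} {i : ℕ} {y : ℝ} {j : ℕ} (hj : j ≤ n + 1) :
    (∃ k, insx n x i y j = x k) ∨ insx n x i y j = y := by
  rw [insx]
  split_ifs with h1 h2 h3
  · exact Or.inl ⟨_, rfl⟩
  · exact Or.inr rfl
  · exact Or.inl ⟨_, rfl⟩
  · omega

set_option maxHeartbeats 2000000 in
/-- **Structural dichotomy.** If `H` is `lam`-partite, where `lam` has fewer than `r` parts,
and `R` is the set of ordered partitions of `r` into one more part refining `lam`, with weights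
`M l` summing to `M`, then either `H` has an interval-wise `lam`-partite sub-collection of size
at least `|H| / (2M)`, or it has a `l`-partite sub-collection of size more than `M l` for some
`l ∈ R`. -/
theorem partite_dichotomy (r : ℕ) (lam : List ℕ) (hlam : IsOrderedPartition r lam)
    (hs : lam.length < r)
    (R : Finset (List ℕ))
    (hR : ∀ l : List ℕ, l ∈ R ↔
      (IsOrderedPartition r l ∧ l.length = lam.length + 1 ∧ Refines lam l))
    (M : List ℕ → ℕ) (hM : ∀ l ∈ R, 0 < M l)
    (H : Finset (Finset ℤ))
    (hcard : ∀ e ∈ H, e.card = r)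
    (hdisj : ∀ e ∈ H, ∀ f ∈ H, e ≠ f → Disjoint e f)
    (hpart : IsLamPartite lam H) :
    (∃ Hs ⊆ H, IsIntervalWisePartite lam Hs ∧ H.card ≤ 2 * (∑ l ∈ R, M l) * Hs.card) ∨
    (∃ l ∈ R, ∃ H' ⊆ H, IsLamPartite l H' ∧ M l < H'.card) := by
  obtain ⟨x, hxmono, hxint, hxcnt⟩ := hpart
  have hn0 : 0 < lam.length := by
    rcases Nat.eq_zero_or_pos lam.length with h | h
    · exfalso
      have hnil : lam = [] := List.length_eq_zero_iff.mp h
      have := hlam.1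
      rw [hnil] at this
      simp at this
      omega
    · exact h
  have hget_pos : ∀ i : Fin lam.length, 0 < lam.get i := fun i => hlam.2 _ (List.get_mem lam i)
  have hPcard : ∀ e ∈ H, ∀ i : Fin lam.length,
      (ipart (x i.castSucc) (x i.succ) e).card = lam.get i := by
    intro e he i
    have h := hxcnt e he i
    rw [setcard] at h
    exact h
  set Mi : Fin lam.length → ℕ :=
    fun i => ∑ a ∈ Finset.Ico 1 (lam.get i), M (splitA lam i a (lam.get i - a)) with hMidef
  have hgetElem : ∀ i : Fin lam.length, lam.get i = lam[(i:ℕ)]'i.isLt :=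
    fun i => List.get_eq_getElem
  have hsplitR : ∀ i : Fin lam.length, ∀ a ∈ Finset.Ico 1 (lam.get i),
      splitA lam i a (lam.get i - a) ∈ R := by
    intro i a ha
    rw [Finset.mem_Ico] at ha
    have hil : (i:ℕ) < lam.length := i.isLt
    have hab : a + (lam.get i - a) = lam[(i:ℕ)]'hil := by
      rw [← hgetElem i]; omega
    rw [hR]
    refine ⟨⟨?_, ?_⟩, ?_, splitA_refines hil hab⟩
    · rw [splitA_sum hil hab]; exact hlam.1
    · intro k hk
      rcases splitA_mem hk with rfl | rfl | hk'
      · omega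
      · have h1 := hget_pos i
        have h2 := ha.2
        omega
      · exact hlam.2 k hk'
    · rw [splitA_length hil]
  set Msum := ∑ l ∈ R, M l with hMsumdef
  have hMiSum : (∑ i : Fin lam.length, Mi i) ≤ Msum := by
    classical
    set T := (Finset.univ.sigma fun i : Fin lam.length => Finset.Ico 1 (lam.get i)) with hT
    set g : (Σ _ : Fin lam.length, ℕ) → List ℕ :=
      fun p => splitA lam p.1 p.2 (lam.get p.1 - p.2) with hg
    have hrw : (∑ i : Fin lam.length, Mi i) = ∑ p ∈ T, M (g p) := by
      rw [hT, Finset.sum_sigma]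
    have hginj : ∀ p ∈ T, ∀ q ∈ T, g p = g q → p = q := by
      intro p hp q hq hpq
      obtain ⟨i, a⟩ := p
      obtain ⟨j, b⟩ := q
      rw [hT, Finset.mem_sigma, Finset.mem_Ico] at hp hq
      rw [hg] at hpq
      simp only at hpq
      rw [hgetElem i, hgetElem j] at hpq
      have h1 := splitA_inj i.isLt j.isLt (by rw [← hgetElem]; exact hp.2.2)
        (by rw [← hgetElem]; exact hq.2.2) hpq
      have h2 : i = j := Fin.ext h1.1
      subst h2
      simp [h1.2]
    rw [hrw, ← Finset.sum_image hginj]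
    refine Finset.sum_le_sum_of_subset ?_
    intro l hl
    obtain ⟨p, hp, rfl⟩ := Finset.mem_image.mp hl
    obtain ⟨i, a⟩ := p
    rw [hT, Finset.mem_sigma] at hp
    exact hsplitR i a hp.2
  obtain ⟨i0, hi0⟩ : ∃ i0 : Fin lam.length, 2 ≤ lam.get i0 := by
    by_contra hc
    push_neg at hc
    have hle : lam.sum ≤ lam.length := by
      have := List.sum_le_card_nsmul lam 1 (by
        intro k hk
        obtain ⟨i, hi⟩ := List.mem_iff_get.mp hk
        have := hc i
        omega)
      simpa using this
    have := hlam.1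
    omega
  have hMi0 : 1 ≤ Mi i0 := by
    have h1 : (1:ℕ) ∈ Finset.Ico 1 (lam.get i0) := Finset.mem_Ico.mpr ⟨le_refl _, by omega⟩
    calc (1:ℕ) ≤ M (splitA lam i0 1 (lam.get i0 - 1)) := hM _ (hsplitR i0 1 h1)
      _ ≤ Mi i0 := Finset.single_le_sum (f := fun a => M (splitA lam i0 a (lam.get i0 - a))) (fun _ _ => Nat.zero_le _) h1
  have hMisum0 : 1 ≤ ∑ i : Fin lam.length, Mi i :=
    le_trans hMi0 (Finset.single_le_sum (fun _ _ => Nat.zero_le _) (Finset.mem_univ i0))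
  by_cases hA : ∃ (i : Fin lam.length) (L : ℤ),
      Mi i < (H.filter (fun e => Pierce (x i.castSucc) (x i.succ) L e)).card
  · -- right disjunct
    obtain ⟨i, L, hAi⟩ := hA
    set u := x i.castSucc with hu
    set v := x i.succ with hv
    set S := H.filter (fun e => Pierce u v L e) with hS
    have hSsub : S ⊆ H := Finset.filter_subset _ _
    set acnt : Finset ℤ → ℕ := fun e => ((ipart u v e).filter (fun z => z ≤ L)).card with hacnt
    have hacnt_mem : ∀ e ∈ S, acnt e ∈ Finset.Ico 1 (lam.get i) := by
      intro e heS
      obtain ⟨heH, ⟨a, ha, haL⟩, ⟨b, hb, hbL⟩⟩ := Finset.mem_filter.mp heS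
      have h1 : 0 < acnt e := Finset.card_pos.mpr ⟨a, Finset.mem_filter.mpr ⟨ha, haL⟩⟩
      have h2 : acnt e < lam.get i := by
        have hsub2 : (ipart u v e).filter (fun z => z ≤ L) ⊆ (ipart u v e).erase b := by
          intro z hz
          obtain ⟨hz1, hz2⟩ := Finset.mem_filter.mp hz
          exact Finset.mem_erase.mpr ⟨by omega, hz1⟩
        have hle := Finset.card_le_card hsub2
        rw [Finset.card_erase_of_mem hb, hPcard e heH i] at hle
        have hpos := hget_pos i
        have : acnt e ≤ lam.get i - 1 := hle
        omega
      exact Finset.mem_Ico.mpr ⟨h1, h2⟩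
    have hfib := Finset.card_eq_sum_card_fiberwise hacnt_mem
    obtain ⟨a, haI, hagt⟩ : ∃ a ∈ Finset.Ico 1 (lam.get i),
        M (splitA lam i a (lam.get i - a)) < (S.filter (fun e => acnt e = a)).card := by
      by_contra hc
      push_neg at hc
      have hcle : S.card ≤ Mi i := by
        rw [hfib, hMidef]
        exact Finset.sum_le_sum hc
      omega
    set l := splitA lam i a (lam.get i - a) with hl
    have hil : (i:ℕ) < lam.length := i.isLt
    have hlen : l.length = lam.length + 1 := splitA_length hil _ _
    set H' := S.filter (fun e => acnt e = a) with hH'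
    have haIco := Finset.mem_Ico.mp haI
    refine Or.inr ⟨l, hsplitR i a haI, H', (Finset.filter_subset _ _).trans hSsub, ?_, hagt⟩
    set y : ℝ := (L:ℝ) + 1/2 with hy
    obtain ⟨e0, he0⟩ : H'.Nonempty := Finset.card_pos.mp (by omega)
    have he0S : e0 ∈ S := (Finset.mem_filter.mp he0).1
    obtain ⟨he0H, ⟨a0, ha0, ha0L⟩, ⟨b0, hb0, hb0L⟩⟩ := Finset.mem_filter.mp he0S
    have hain := Finset.mem_filter.mp ha0
    have hbin := Finset.mem_filter.mp hb0
    have hyu : u < y := lt_trans hain.2.1 (by rw [hy]; exact int_lt_half.mpr ha0L)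
    have hyv : y < v := lt_trans (by rw [hy]; exact half_lt_int.mpr hb0L) hbin.2.2
    refine ⟨fun j => insx lam.length x i y (j:ℕ), ?_, ?_, ?_⟩
    · -- StrictMono
      rw [Fin.strictMono_iff_lt_succ]
      intro j
      have hjl : (j:ℕ) < lam.length + 1 := by have := j.isLt; omega
      simp only [Fin.coe_castSucc, Fin.val_succ]
      rcases Nat.lt_trichotomy (j:ℕ) i with hlt | heq | hgt
      · rw [insx_le (by omega) hil, insx_le (by omega) hil]
        exact hxmono (by simp [Fin.mk_lt_mk])
      · rw [heq, insx_le (le_refl _) hil, insx_mid]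
        exact hyu
      · rcases Nat.lt_or_ge (i+1:ℕ) (j:ℕ) with hgt2 | hle2
        · rw [insx_gt hgt2 (by omega), insx_gt (by omega) (by omega)]
          exact hxmono (by simp [Fin.mk_lt_mk]; omega)
        · have hji : (j:ℕ) = (i:ℕ)+1 := by omega
          rw [hji, insx_mid, insx_gt (by omega) (by omega)]
          exact hyv
    · -- noninteger
      intro j z
      have hj : (j:ℕ) ≤ lam.length + 1 := by
        have := j.isLt
        omega
      show (z:ℝ) ≠ insx lam.length x (↑i) y ↑j
      rcases insx_cases (x := x) (i := (i:ℕ)) (y := y) hj with ⟨k, hk⟩ | hk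
      · rw [hk]; exact hxint k z
      · rw [hk, hy]; exact half_ne_int L z
    · -- counts
      intro e heH' j
      have heS : e ∈ S := (Finset.mem_filter.mp heH').1
      have hea : acnt e = a := (Finset.mem_filter.mp heH').2
      have heH : e ∈ H := hSsub heS
      rw [setcard]
      have hjl : (j:ℕ) < lam.length + 1 := by have := j.isLt; omega
      simp only [Fin.coe_castSucc, Fin.val_succ]
      rcases Nat.lt_trichotomy (j:ℕ) i with hlt | heq | hgt
      · -- j < i
        simp only [insx_le (j := (j:ℕ)) (by omega) hil, insx_le (j := (j:ℕ)+1) (by omega) hil]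
        have hc := hPcard e heH ⟨(j:ℕ), by omega⟩
        have hlg : l.get j = lam[(j:ℕ)]'(by omega) := by
          rw [List.get_eq_getElem]
          exact splitA_get_lt hil hlt _ _
        rw [hlg]
        exact hc
      · -- j = i
        simp only [heq, insx_le (j := (i:ℕ)) (le_refl _) hil, insx_mid]
        have hlg : l.get j = a := by
          rw [List.get_eq_getElem]
          simp only [heq]
          exact splitA_get_i hil _ _
        rw [hlg]
        have key : Finset.filter (fun z : ℤ => u < (z:ℝ) ∧ (z:ℝ) < y) e
            = (ipart u v e).filter (fun z => z ≤ L) := by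
          ext z
          constructor
          · intro hz
            obtain ⟨hz0, hz1, hz2⟩ := Finset.mem_filter.mp hz
            have hzL : z ≤ L := int_lt_half.mp (by rw [← hy]; exact hz2)
            exact Finset.mem_filter.mpr ⟨Finset.mem_filter.mpr ⟨hz0, hz1, lt_trans hz2 hyv⟩, hzL⟩
          · intro hz
            obtain ⟨hz0, hzL⟩ := Finset.mem_filter.mp hz
            obtain ⟨hz1, hz2, hz3⟩ := Finset.mem_filter.mp hz0
            exact Finset.mem_filter.mpr ⟨hz1, hz2, by rw [hy]; exact int_lt_half.mpr hzL⟩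
        show (Finset.filter (fun z : ℤ => u < (z:ℝ) ∧ (z:ℝ) < y) e).card = a
        rw [key]
        exact hea
      · rcases Nat.lt_or_ge (i+1:ℕ) (j:ℕ) with hgt2 | hle2
        · -- j > i + 1
          obtain ⟨jv, hjv⟩ : ∃ jv, (j:ℕ) = jv + 1 := ⟨(j:ℕ)-1, by omega⟩
          simp only [hjv, insx_gt (n := lam.length) (x := x) (i := (i:ℕ)) (y := y) (j := jv+1) (by omega) (by omega),
            insx_gt (n := lam.length) (x := x) (i := (i:ℕ)) (y := y) (j := jv+1+1) (by omega) (by omega)]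
          have hc := hPcard e heH ⟨jv, by omega⟩
          have hlg : l.get j = lam[jv]'(by omega) := by
            rw [List.get_eq_getElem]
            simp only [hjv]
            exact splitA_get_gt hil (by omega) (by omega) _ _
          rw [hlg]
          exact hc
        · -- j = i + 1
          have hji : (j:ℕ) = (i:ℕ)+1 := by omega
          simp only [hji, insx_mid, insx_gt (n := lam.length) (x := x) (i := (i:ℕ)) (y := y) (j := (i:ℕ)+1+1) (by omega) (by omega)]
          have hlg : l.get j = lam.get i - a := by
            rw [List.get_eq_getElem]
            simp only [hji]
            exact splitA_get_i1 hil _ _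
          rw [hlg]
          have key2 : Finset.filter (fun z : ℤ => y < (z:ℝ) ∧ (z:ℝ) < v) e
              = (ipart u v e).filter (fun z => ¬ z ≤ L) := by
            ext z
            constructor
            · intro hz
              obtain ⟨hz0, hz1, hz2⟩ := Finset.mem_filter.mp hz
              have hzL : L < z := half_lt_int.mp (by rw [← hy]; exact hz1)
              exact Finset.mem_filter.mpr
                ⟨Finset.mem_filter.mpr ⟨hz0, lt_trans hyu hz1, hz2⟩, by omega⟩
            · intro hz
              obtain ⟨hz0, hzL⟩ := Finset.mem_filter.mp hz
              obtain ⟨hz1, hz2, hz3⟩ := Finset.mem_filter.mp hz0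
              refine Finset.mem_filter.mpr ⟨hz1, ?_, hz3⟩
              rw [hy]
              exact half_lt_int.mpr (by omega)
          show (Finset.filter (fun z : ℤ => y < (z:ℝ) ∧ (z:ℝ) < v) e).card = lam.get i - a
          rw [key2]
          have hsplitc := Finset.card_filter_add_card_filter_not
            (s := ipart u v e) (fun z : ℤ => z ≤ L)
          have hipc : (ipart u v e).card = lam.get i := hPcard e heH i
          have haec : ((ipart u v e).filter (fun z => z ≤ L)).card = a := hea
          omega
  · -- left disjunct
    push_neg at hA
    set Rel : Finset ℤ → Finset ℤ → Prop :=
      fun e f => ∃ i : Fin lam.length, Confl (x i.castSucc) (x i.succ) e f with hRel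
    have hsymm : ∀ e f, Rel e f → Rel f e := by
      rintro e f ⟨i, hi⟩; exact ⟨i, confl_symm hi⟩
    set D := ∑ i : Fin lam.length, 2 * (Mi i - 1) with hD
    have hdeg : ∀ S ⊆ H, S.Nonempty →
        ∃ e ∈ S, (S.filter (fun f => f = e ∨ Rel e f)).card ≤ D + 1 := by
      intro S hSH hSne
      have hsum : (∑ e ∈ S, (S.filter (fun f => f ≠ e ∧ Rel e f)).card) ≤ D * S.card := by
        have hstep : ∀ e ∈ S, (S.filter (fun f => f ≠ e ∧ Rel e f)).card ≤
            ∑ i : Fin lam.length,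
              (S.filter (fun f => f ≠ e ∧ Confl (x i.castSucc) (x i.succ) e f)).card := by
          intro e _
          refine le_trans (Finset.card_le_card ?_) Finset.card_biUnion_le
          intro f hf
          obtain ⟨hfS, hne, i, hci⟩ := Finset.mem_filter.mp hf
          exact Finset.mem_biUnion.mpr
            ⟨i, Finset.mem_univ _, Finset.mem_filter.mpr ⟨hfS, hne, hci⟩⟩
        calc (∑ e ∈ S, (S.filter (fun f => f ≠ e ∧ Rel e f)).card)
            ≤ ∑ e ∈ S, ∑ i : Fin lam.length,
                (S.filter (fun f => f ≠ e ∧ Confl (x i.castSucc) (x i.succ) e f)).card :=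
              Finset.sum_le_sum hstep
          _ = ∑ i : Fin lam.length, ∑ e ∈ S,
                (S.filter (fun f => f ≠ e ∧ Confl (x i.castSucc) (x i.succ) e f)).card :=
              Finset.sum_comm
          _ ≤ ∑ i : Fin lam.length, 2 * (Mi i - 1) * S.card := by
              refine Finset.sum_le_sum ?_
              intro i _
              exact degree_sum_bound (x i.castSucc) (x i.succ) H (lam.get i)
                (fun e he => hPcard e he i) (Mi i) (fun L => hA i L) S.card S hSH rfl
          _ = D * S.card := by rw [hD, Finset.sum_mul]
      by_contra hc
      push_neg at hc
      have hc' : ∀ e ∈ S, D + 1 ≤ (S.filter (fun f => f ≠ e ∧ Rel e f)).card := by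
        intro e heS
        have h2 := hc e heS
        have hsub : S.filter (fun f => f = e ∨ Rel e f) ⊆
            insert e (S.filter (fun f => f ≠ e ∧ Rel e f)) := by
          intro f hf
          obtain ⟨hfS, hor⟩ := Finset.mem_filter.mp hf
          by_cases hfe : f = e
          · exact Finset.mem_insert.mpr (Or.inl hfe)
          · rcases hor with h | h
            · exact absurd h hfe
            · exact Finset.mem_insert.mpr (Or.inr (Finset.mem_filter.mpr ⟨hfS, hfe, h⟩))
        have hle1 := Finset.card_le_card hsub
        have hle2 := Finset.card_insert_le e (S.filter (fun f => f ≠ e ∧ Rel e f))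
        omega
      have hlow := Finset.card_nsmul_le_sum S _ (D+1) hc'
      rw [smul_eq_mul] at hlow
      have hpos : 1 ≤ S.card := Finset.card_pos.mpr hSne
      have he1 : S.card * (D+1) = S.card * D + S.card := by ring
      have he2 : D * S.card = S.card * D := by ring
      omega
    obtain ⟨T, hTsub, hTindep, hTcard⟩ :=
      greedy_indep H Rel hsymm D hdeg H.card H (Finset.Subset.refl _) rfl
    refine Or.inl ⟨T, hTsub, ⟨x, hxmono, hxint, ?_, ?_⟩, ?_⟩
    · intro e he i
      exact hxcnt e (hTsub he) i
    · intro i e he f hf hef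
      have hnc : ¬ Confl (x i.castSucc) (x i.succ) e f := fun hcf =>
        hTindep e he f hf hef ⟨i, hcf⟩
      have hdiff : ∀ a ∈ e, ∀ b ∈ f, a ≠ b := by
        intro a ha b hb hab
        subst hab
        exact (Finset.disjoint_left.mp (hdisj e (hTsub he) f (hTsub hf) hef) ha) hb
      by_cases hB : ∃ a ∈ ipart (x i.castSucc) (x i.succ) e,
          ∃ b ∈ ipart (x i.castSucc) (x i.succ) f, a < b
      · left
        intro a ha b hb hra hrb
        have hamem : a ∈ ipart (x i.castSucc) (x i.succ) e := Finset.mem_filter.mpr ⟨ha, hra⟩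
        have hbmem : b ∈ ipart (x i.castSucc) (x i.succ) f := Finset.mem_filter.mpr ⟨hb, hrb⟩
        by_contra hab
        push_neg at hab
        exact hnc ⟨⟨a, hamem, b, hbmem,
          lt_of_le_of_ne hab (fun hc => hdiff a ha b hb hc.symm)⟩, hB⟩
      · right
        intro a ha b hb hra hrb
        have hamem : a ∈ ipart (x i.castSucc) (x i.succ) e := Finset.mem_filter.mpr ⟨ha, hra⟩
        have hbmem : b ∈ ipart (x i.castSucc) (x i.succ) f := Finset.mem_filter.mpr ⟨hb, hrb⟩
        push_neg at hB
        have hba := hB a hamem b hbmem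
        exact lt_of_le_of_ne hba (fun hc => hdiff a ha b hb hc.symm)
    · have hA1 : (∑ i : Fin lam.length, (Mi i - 1)) + 1 ≤ ∑ i : Fin lam.length, Mi i := by
        have e1 : ∑ i : Fin lam.length, Mi i = Mi i0 + ∑ i ∈ Finset.univ.erase i0, Mi i :=
          (Finset.add_sum_erase _ _ (Finset.mem_univ i0)).symm
        have e2 : ∑ i : Fin lam.length, (Mi i - 1)
            = (Mi i0 - 1) + ∑ i ∈ Finset.univ.erase i0, (Mi i - 1) :=
          (Finset.add_sum_erase _ _ (Finset.mem_univ i0)).symm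
        have e3 : ∑ i ∈ Finset.univ.erase i0, (Mi i - 1) ≤ ∑ i ∈ Finset.univ.erase i0, Mi i :=
          Finset.sum_le_sum (fun i _ => Nat.sub_le _ _)
        omega
      have hDval : D = 2 * ∑ i : Fin lam.length, (Mi i - 1) := by rw [hD, Finset.mul_sum]
      have hD1 : D + 1 ≤ 2 * Msum := by omega
      calc H.card ≤ (D + 1) * T.card := hTcard
        _ ≤ 2 * Msum * T.card := Nat.mul_le_mul_right _ hD1
end
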